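/- arXiv:0902.3953 — 5 statements merged into one kernel-verified Lean document; each statement's English description precedes it below -/
import Mathlib

section
/- Let q ≥ 4 be even, a_0 ∈ ℤ, and let a_1, …, a_n be nonzero integers such that the finite sequence (a_1, …, a_n, 1, 1, …, 1) with h_q trailing entries 1 is q-regular. Then a_n ≠ 1, the finite sequence (a_1, …, a_{n−1}, a_n − 1, −1, …, −1) with h_q trailing entries −1 is also q-regular, the last denominators of both finite continued fractions are nonzero, and the values coincide: [a_0; a_1, …, a_n, (1)^{h_q}] = [a_0; a_1, …, a_{n−1}, a_n − 1, (−1)^{h_q}]. -/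
open Filter Topology

/-- `λ_q = 2 cos (π/q)`. -/
noncomputable def lamq (q : ℕ) : ℝ := 2 * Real.cos (Real.pi / q)

/-- `h_q = (q-2)/2` for even `q` and `(q-3)/2` for odd `q`. -/
def hQ (q : ℕ) : ℕ := if Even q then (q - 2) / 2 else (q - 3) / 2

/-- Forbidden blocks for the nearest `λ_q`-multiple continued fractions.
For `ε ∈ {1,-1}`: the block `(ε)^{h_q+1}`; for even `q` the blocks `((ε)^{h_q}, ε·m)`, `m ≥ 1`;
for odd `q` (including `q = 3`, where `h_q = 0`) the blocks `((ε)^{h_q}, ε·2, (ε)^{h_q}, ε·m)`,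
`m ≥ 1`. -/
def IsForbidden (q : ℕ) (L : List ℤ) : Prop :=
  ∃ ε : ℤ, (ε = 1 ∨ ε = -1) ∧
    (L = List.replicate (hQ q + 1) ε ∨
      (if Even q then
        ∃ m : ℤ, 1 ≤ m ∧ L = List.replicate (hQ q) ε ++ [ε * m]
      else
        ∃ m : ℤ, 1 ≤ m ∧
          L = List.replicate (hQ q) ε ++ ε * 2 :: (List.replicate (hQ q) ε ++ [ε * m])))

/-- An infinite sequence is `q`-regular if no finite subblock is forbidden. -/
def RegularSeq (q : ℕ) (a : ℕ → ℤ) : Prop :=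
  ∀ (l len : ℕ), ¬ IsForbidden q (List.ofFn fun j : Fin len => a (l + (j : ℕ)))

/-- An infinite sequence is dual `q`-regular if no reversed finite subblock is forbidden. -/
def DualRegularSeq (q : ℕ) (a : ℕ → ℤ) : Prop :=
  ∀ (l len : ℕ), ¬ IsForbidden q (List.ofFn fun j : Fin len => a (l + (j : ℕ))).reverse

/-- A finite sequence is `q`-regular if no contiguous subblock is forbidden. -/
def RegularList (q : ℕ) (L : List ℤ) : Prop :=
  ∀ B : List ℤ, B <:+: L → ¬ IsForbidden q B

/-- Numerators of the convergents: `p₀ = a₀λ`, `p₁ = a₁λ·p₀ - 1`,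
`pₙ = aₙλ·pₙ₋₁ - pₙ₋₂` (so that `p₋₁ = 1`, `p₋₂ = 0`).  Here `A n` is the digit `aₙ`. -/
noncomputable def cfP (lam : ℝ) (A : ℕ → ℤ) : ℕ → ℝ
  | 0 => (A 0 : ℝ) * lam
  | 1 => (A 1 : ℝ) * lam * ((A 0 : ℝ) * lam) - 1
  | (n + 2) => (A (n + 2) : ℝ) * lam * cfP lam A (n + 1) - cfP lam A n

/-- Denominators of the convergents: `q₀ = 1`, `q₁ = a₁λ`,
`qₙ = aₙλ·qₙ₋₁ - qₙ₋₂` (so that `q₋₁ = 0`, `q₋₂ = -1`). -/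
noncomputable def cfQ (lam : ℝ) (A : ℕ → ℤ) : ℕ → ℝ
  | 0 => 1
  | 1 => (A 1 : ℝ) * lam
  | (n + 2) => (A (n + 2) : ℝ) * lam * cfQ lam A (n + 1) - cfQ lam A n

/-- The λ-continued fraction with digit sequence `A` converges to `x`. -/
def CFConvergesTo (lam : ℝ) (A : ℕ → ℤ) (x : ℝ) : Prop :=
  (∀ n, cfQ lam A n ≠ 0) ∧
    Filter.Tendsto (fun n => cfP lam A n / cfQ lam A n) Filter.atTop (nhds x)

/-- The value `p_L/q_L` of the finite continued fraction `[a₀; a₁, …, a_L]`. -/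
noncomputable def cfValList (lam : ℝ) (a0 : ℤ) (L : List ℤ) : ℝ :=
  cfP lam (fun i => (a0 :: L).getD i 0) L.length /
    cfQ lam (fun i => (a0 :: L).getD i 0) L.length

/-- The last denominator `q_L` of the finite continued fraction `[a₀; a₁, …, a_L]`. -/
noncomputable def cfDenList (lam : ℝ) (a0 : ℤ) (L : List ℤ) : ℝ :=
  cfQ lam (fun i => (a0 :: L).getD i 0) L.length

/-- The modified floor: `⌊t⌋* = ⌈t⌉ - 1` for `t > 0` and `⌊t⌋* = ⌊t⌋` for `t ≤ 0`. -/
noncomputable def floorstar (t : ℝ) : ℤ := if 0 < t then ⌈t⌉ - 1 else ⌊t⌋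

/-- The nearest `λ`-multiple: `⟨y⟩ = ⌊y/λ + 1/2⌋*`. -/
noncomputable def nearestLam (lam : ℝ) (x : ℝ) : ℤ := floorstar (x / lam + 1 / 2)

/-- The interval map `f_q` on `I_q = [-λ/2, λ/2]`. -/
noncomputable def fq (lam : ℝ) (x : ℝ) : ℝ :=
  if x = 0 then 0 else -1 / x - (nearestLam lam (-1 / x) : ℝ) * lam

/-- `R_q`: equal to `1` for even `q`, and the positive root of `R² + (2-λ_q)R = 1` for odd `q`. -/
noncomputable def Rq (q : ℕ) : ℝ :=
  if Even q then 1 else (lamq q - 2 + Real.sqrt ((2 - lamq q) ^ 2 + 4)) / 2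

/-- `r_q = R_q - λ_q`. -/
noncomputable def rq (q : ℕ) : ℝ := Rq q - lamq q

/-- The map `⟨·⟩*` used by the dual algorithm. -/
noncomputable def nearestDual (lam R y : ℝ) : ℤ :=
  if 0 ≤ y then floorstar (y / lam + 1 - R / lam) else floorstar (y / lam + R / lam)

/-- The dual interval map `f_q^*` on `I_{R_q} = [-R_q, R_q]`. -/
noncomputable def fqstar (lam R : ℝ) (x : ℝ) : ℝ :=
  if x = 0 then 0 else -1 / x - (nearestDual lam R (-1 / x) : ℝ) * lam

/-- The matrix `S = [[0,-1],[1,0]]` as an element of `SL(2,ℝ)`. -/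
noncomputable def matS : Matrix.SpecialLinearGroup (Fin 2) ℝ :=
  ⟨!![0, -1; 1, 0], by norm_num [Matrix.det_fin_two_of]⟩

/-- The matrix `T = [[1,λ],[0,1]]` as an element of `SL(2,ℝ)`. -/
noncomputable def matT (lam : ℝ) : Matrix.SpecialLinearGroup (Fin 2) ℝ :=
  ⟨!![1, lam; 0, 1], by norm_num [Matrix.det_fin_two_of]⟩

/-- The Hecke triangle group `G_q`, the subgroup of `SL(2,ℝ)` generated by `S` and `T_q`. -/
noncomputable def Hecke (q : ℕ) : Subgroup (Matrix.SpecialLinearGroup (Fin 2) ℝ) :=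
  Subgroup.closure {matS, matT (lamq q)}

/-- The Möbius action of `g` on `x ∈ ℝ`. -/
noncomputable def moeb (g : Matrix.SpecialLinearGroup (Fin 2) ℝ) (x : ℝ) : ℝ :=
  (g.val 0 0 * x + g.val 0 1) / (g.val 1 0 * x + g.val 1 1)

/-- `x` and `y` are `G_q`-equivalent. -/
def GqEquiv (q : ℕ) (x y : ℝ) : Prop :=
  ∃ g ∈ Hecke q, (g.val 1 0 * x + g.val 1 1 ≠ 0) ∧ moeb g x = y

/-- Two sequences have a common tail. -/
def CommonTail (a b : ℕ → ℤ) : Prop := ∃ m n : ℕ, ∀ k : ℕ, a (m + k) = b (n + k)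

/-- The period block of `ρ_q`: `(3)` for `q = 3`, `((1)^{h_q-1}, 2)` for even `q`
and `((1)^{h_q}, 2, (1)^{h_q-1}, 2)` for odd `q ≥ 5`. -/
def rhoBlock (q : ℕ) : List ℤ :=
  if q = 3 then [3]
  else if Even q then List.replicate (hQ q - 1) 1 ++ [2]
  else List.replicate (hQ q) 1 ++ 2 :: (List.replicate (hQ q - 1) 1 ++ [2])

/-- The periodic sequence `ρ_q`. -/
def rho (q : ℕ) (i : ℕ) : ℤ := (rhoBlock q).getD (i % (rhoBlock q).length) 0

/-- `x` has the infinite regular `λ_q`-CF with digit sequence `A` (with `A 0 = a₀`). -/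
def HasRegCF (q : ℕ) (x : ℝ) (A : ℕ → ℤ) : Prop :=
  (∀ i, A (i + 1) ≠ 0) ∧ RegularSeq q (fun i => A (i + 1)) ∧ CFConvergesTo (lamq q) A x

/-- `x` has the infinite dual regular `λ_q`-CF with digit sequence `A` (with `A 0 = a₀`). -/
def HasDualRegCF (q : ℕ) (x : ℝ) (A : ℕ → ℤ) : Prop :=
  (∀ i, A (i + 1) ≠ 0) ∧ DualRegularSeq q (fun i => A (i + 1)) ∧ CFConvergesTo (lamq q) A x

/-- The digits of `x` produced by the algorithm for `f_q`: `a_{i+1} = ⟨-1 / f_q^i(x)⟩`. -/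
noncomputable def digitSeq (lam : ℝ) (x : ℝ) : ℕ → ℤ :=
  fun i => nearestLam lam (-1 / (fq lam)^[i] x)

/-- The digits of `x` produced by the algorithm for `f_q^*`: `b_{i+1} = ⟨-1 / (f_q^*)^i(x)⟩*`. -/
noncomputable def digitSeqStar (lam R : ℝ) (x : ℝ) : ℕ → ℤ :=
  fun i => nearestDual lam R (-1 / (fqstar lam R)^[i] x)


/- ------------------------------------------------------------------ -/
/- Auxiliary lemmas                                                    -/
/- ------------------------------------------------------------------ -/

lemma infix_iff_getD {B C : List ℤ} :
    B <:+: C ↔ ∃ i, i + B.length ≤ C.length ∧ ∀ j < B.length, B.getD j 0 = C.getD (i + j) 0 := by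
  constructor
  · rintro ⟨s, t, rfl⟩
    refine ⟨s.length, by simp, fun j hj => ?_⟩
    rw [List.append_assoc, List.getD_append_right _ _ _ _ (by omega), Nat.add_sub_cancel_left,
      List.getD_append _ _ _ _ hj]
  · rintro ⟨i, hlen, hval⟩
    have hB : B = (C.drop i).take B.length := by
      apply List.ext_getElem
      · rw [List.length_take, List.length_drop]; omega
      · intro n h1 h2
        have hn : n < B.length := h1
        have := hval n hn
        rw [List.getD_eq_getElem _ _ hn, List.getD_eq_getElem _ _ (by omega)] at this
        rw [this, List.getElem_take, List.getElem_drop]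
    have key : C.take i ++ ((C.drop i).take B.length ++ C.drop (i + B.length)) = C := by
      have h2 : C.drop (i + B.length) = (C.drop i).drop B.length := by
        simp [List.drop_drop, Nat.add_comm]
      rw [h2, List.take_append_drop, List.take_append_drop]
    exact ⟨C.take i, C.drop (i + B.length), by
      rw [List.append_assoc]; nth_rewrite 1 [hB]; exact key⟩

lemma forb_even {q : ℕ} (hqe : Even q) {B : List ℤ} :
    IsForbidden q B ↔
      ∃ ε m : ℤ, (ε = 1 ∨ ε = -1) ∧ 1 ≤ m ∧ B = List.replicate (hQ q) ε ++ [ε * m] := by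
  unfold IsForbidden
  simp only [if_pos hqe]
  constructor
  · rintro ⟨ε, hε, hB | ⟨m, hm, hB⟩⟩
    · exact ⟨ε, 1, hε, le_refl 1, by rw [hB, List.replicate_succ', mul_one]⟩
    · exact ⟨ε, m, hε, hm, hB⟩
  · rintro ⟨ε, m, hε, hm, hB⟩
    exact ⟨ε, hε, Or.inr ⟨m, hm, hB⟩⟩

lemma repApp_length (h : ℕ) (ε x : ℤ) : (List.replicate h ε ++ [x]).length = h + 1 := by simp

lemma repApp_getD (h : ℕ) (ε x : ℤ) (j : ℕ) (hj : j ≤ h) :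
    (List.replicate h ε ++ [x]).getD j 0 = if j < h then ε else x := by
  rcases lt_or_eq_of_le hj with hlt | rfl
  · rw [if_pos hlt, List.getD_append _ _ _ _ (by simpa using hlt),
      List.getD_eq_getElem _ _ (by simpa using hlt)]
    simp
  · rw [if_neg (lt_irrefl j), List.getD_append_right _ _ _ _ (by simp)]
    simp

lemma two_hQ {q : ℕ} (hq : 4 ≤ q) (hqe : Even q) : 2 * hQ q + 2 = q := by
  obtain ⟨m, rfl⟩ := hqe
  have : Even (m + m) := ⟨m, rfl⟩
  simp only [hQ, if_pos this]
  omega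

section trig

variable {q : ℕ} (hq : 4 ≤ q) (hqe : Even q)

include hq in
lemma qR_pos : (0:ℝ) < q := by exact_mod_cast (show 0 < q by omega)

include hq in
lemma theta_pos : 0 < Real.pi / q := div_pos Real.pi_pos (qR_pos hq)

include hq hqe in
lemma sin_pos_theta {j : ℕ} (h1 : 1 ≤ j) (h2 : j ≤ hQ q + 2) :
    0 < Real.sin ((j : ℝ) * (Real.pi / q)) := by
  have twoh := two_hQ hq hqe
  have hq0 : (0:ℝ) < q := qR_pos hq
  apply Real.sin_pos_of_pos_of_lt_pi
  · have : (0:ℝ) < (j:ℝ) := by exact_mod_cast h1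
    have := theta_pos (q := q) hq
    positivity
  · have hjq : (j:ℝ) < q := by exact_mod_cast (by omega : j < q)
    rw [← mul_div_assoc, div_lt_iff₀ hq0]
    nlinarith [Real.pi_pos]

include hq hqe in
lemma half_pi_eq : ((hQ q : ℝ) + 1) * (Real.pi / q) = Real.pi / 2 := by
  have twoh := two_hQ hq hqe
  have hcast : (q:ℝ) = 2 * (hQ q : ℝ) + 2 := by exact_mod_cast twoh.symm
  have hq0 : (0:ℝ) < q := qR_pos hq
  rw [hcast] at *
  field_simp

lemma sin_rec (θ x : ℝ) :
    Real.sin (x + θ) = 2 * Real.cos θ * Real.sin x - Real.sin (x - θ) := by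
  rw [Real.sin_add, Real.sin_sub]; ring

lemma cos_rec (θ x : ℝ) :
    Real.cos (x + θ) = 2 * Real.cos θ * Real.cos x - Real.cos (x - θ) := by
  rw [Real.cos_add, Real.cos_sub]; ring

include hq in
lemma lam_pos : 0 < lamq q := by
  have h1 := theta_pos (q := q) hq
  have h2 : Real.pi / q ≤ Real.pi / 4 := by
    apply div_le_div_of_nonneg_left Real.pi_pos.le (by norm_num) (by exact_mod_cast hq)
  unfold lamq
  have : 0 < Real.cos (Real.pi / q) := by
    apply Real.cos_pos_of_mem_Ioo
    constructor
    · nlinarith [Real.pi_pos]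
    · nlinarith [Real.pi_pos]
  linarith

include hq in
lemma lam_sq : 2 ≤ (lamq q) ^ 2 := by
  have h1 := theta_pos (q := q) hq
  have h2 : Real.pi / q ≤ Real.pi / 4 := by
    apply div_le_div_of_nonneg_left Real.pi_pos.le (by norm_num) (by exact_mod_cast hq)
  have h3 : Real.cos (Real.pi / 4) ≤ Real.cos (Real.pi / q) := by
    apply Real.cos_le_cos_of_nonneg_of_le_pi h1.le (by nlinarith [Real.pi_pos]) h2
  rw [Real.cos_pi_div_four] at h3
  have h4 : (0:ℝ) ≤ Real.sqrt 2 := Real.sqrt_nonneg 2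
  have h5 : Real.sqrt 2 ^ 2 = 2 := Real.sq_sqrt (by norm_num)
  unfold lamq
  nlinarith

include hq hqe in
lemma cos_sin_le {j : ℕ} (h1 : 1 ≤ j) (h2 : j ≤ hQ q + 1) :
    Real.cos (Real.pi / q) * Real.sin ((j:ℝ) * (Real.pi / q)) ≤
      Real.sin (((j:ℝ) + 1) * (Real.pi / q)) := by
  set θ := Real.pi / q with hθ
  have hexp : Real.sin (((j:ℝ) + 1) * θ) =
      Real.sin ((j:ℝ) * θ) * Real.cos θ + Real.cos ((j:ℝ) * θ) * Real.sin θ := by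
    rw [show ((j:ℝ) + 1) * θ = (j:ℝ) * θ + θ by ring, Real.sin_add]
  have hθpos := theta_pos (q := q) hq
  have hsθ : 0 < Real.sin θ := by
    have := sin_pos_theta hq hqe (j := 1) le_rfl (by omega)
    simpa using this
  have hcosj : 0 ≤ Real.cos ((j:ℝ) * θ) := by
    apply Real.cos_nonneg_of_mem_Icc
    constructor
    · have : (0:ℝ) ≤ (j:ℝ) * θ := by positivity
      nlinarith [Real.pi_pos]
    · have hj : (j:ℝ) ≤ (hQ q : ℝ) + 1 := by exact_mod_cast h2
      have := half_pi_eq hq hqe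
      nlinarith
  nlinarith

end trig

lemma aux_v_pos {u v w : ℝ} (hu2 : u^2 = v*w) (hupos : 0 < u) (hw : 0 < w) : 0 < v := by
  nlinarith
lemma aux_wcu {c u v w : ℝ} (hu2 : u^2 = v*w) (hcu : c*v < u) (hupos : 0 < u) (hv : 0 < v) :
    c*u < w := by nlinarith
lemma aux_caseA {lam c c' w u : ℝ} (hc : 0 < c) (hcc' : c*c' = lam*c - 1) (hwcu : c*u < w) :
    c'*w < lam*w - u := by
  rw [← mul_lt_mul_iff_right₀ hc]
  have h2 : c*(c'*w) = (lam*c-1)*w := by linear_combination w*hcc'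
  rw [h2]
  nlinarith [hwcu]
lemma aux_caseB {lam c w u β : ℝ} (hc : 0 < c) (hcge : lam/2 ≤ c) (hwcu : c*u < w)
    (hupos : 0 < u) (hlam2 : 2 ≤ lam^2) (hlampos : 0 < lam) (hw : 0 < w) (hβ : 2 ≤ β) :
    lam*w < β*lam*w - u := by
  have h1 : lam*u < 2*w := by nlinarith
  have h2 : u < lam*w := by nlinarith
  nlinarith
lemma aux_caseC {lam c2 w u : ℝ} (hc2 : c2 ≤ lam) (hw : 0 < w) (hupos : 0 < u) :
    c2*w < lam*w + u := by nlinarith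
lemma aux_caseD {lam w u β : ℝ} (hβ : 2 ≤ β) (hlampos : 0 < lam) (hw : 0 < w) (hupos : 0 < u) :
    lam*w < β*lam*w + u := by nlinarith [mul_pos hlampos hw, hβ, hupos]

lemma core_den (q : ℕ) (hq : 4 ≤ q) (hqe : Even q) (a : ℕ → ℤ) (N : ℕ)
    (hnz : ∀ i, 1 ≤ i → i ≤ N → a i ≠ 0)
    (hrun : ∀ n, n ≤ N → hQ q + 1 ≤ n → ∀ ε : ℤ, (ε = 1 ∨ ε = -1) →
      ¬ (∀ j, j < hQ q + 1 → a (n - j) = ε)) :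
    ∀ n, n ≤ N → cfQ (lamq q) a n ≠ 0 := by
  have twoh := two_hQ hq hqe
  have hh1 : 1 ≤ hQ q := by omega
  set θ := Real.pi / q with hθdef
  set lam := lamq q with hlamdef
  have hlam : lam = 2 * Real.cos θ := rfl
  have hθpos : 0 < θ := theta_pos hq
  have hS : ∀ j : ℕ, 1 ≤ j → j ≤ hQ q + 2 → 0 < Real.sin ((j:ℝ) * θ) :=
    fun j h1 h2 => sin_pos_theta hq hqe h1 h2
  have hlampos : 0 < lam := lam_pos hq
  have hlam2 : 2 ≤ lam ^ 2 := lam_sq hq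
  have hcos : ∀ j : ℕ, 1 ≤ j → j ≤ hQ q + 1 →
      (lam/2) * Real.sin ((j:ℝ)*θ) ≤ Real.sin (((j:ℝ)+1)*θ) := by
    intro j h1 h2
    have h3 := cos_sin_le hq hqe h1 h2
    rw [hlam]
    linarith [h3]
  have hrec : ∀ x : ℝ, Real.sin (x + θ) = lam * Real.sin x - Real.sin (x - θ) :=
    fun x => by rw [hlam]; exact sin_rec θ x
  have hsθ : 0 < Real.sin θ := by
    have := hS 1 le_rfl (by omega); simpa using this
  have hsin2 : Real.sin (2*θ) = lam * Real.sin θ := by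
    have := hrec θ
    rw [show θ + θ = 2*θ by ring] at this
    simpa using this
  have hs2 : 0 < Real.sin (2*θ) := by
    have h5 := hS 2 (by omega) (by omega)
    have h6 : ((2:ℕ):ℝ) * θ = 2 * θ := by push_cast; ring
    rwa [h6] at h5
  have hs3eq : Real.sin (3*θ) = lam * Real.sin (2*θ) - Real.sin θ := by
    have := hrec (2*θ)
    rw [show 2*θ + θ = 3*θ by ring, show 2*θ - θ = θ by ring] at this
    exact this
  have hs3 : 0 < Real.sin (3*θ) := by
    have h5 := hS 3 (by omega) (by omega)
    have h6 : ((3:ℕ):ℝ) * θ = 3 * θ := by push_cast; ring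
    rwa [h6] at h5
  have main : ∀ n, n ≤ N → cfQ lam a n ≠ 0 ∧ (1 ≤ n →
      ∃ ε : ℤ, ∃ k : ℕ, (ε = 1 ∨ ε = -1) ∧ k ≤ hQ q ∧ k ≤ n ∧ 0 < ε * a n ∧
        (∀ j, j < k → a (n - j) = ε) ∧
        Real.sin (((k:ℝ)+2)*θ) / Real.sin (((k:ℝ)+1)*θ) * (cfQ lam a (n-1))^2 <
          (ε:ℝ) * (cfQ lam a n * cfQ lam a (n-1))) := by
    intro n
    induction n with
    | zero => exact fun _ => ⟨by norm_num [cfQ], by omega⟩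
    | succ n ih =>
      intro hn1
      have hnN : n ≤ N := by omega
      have hb : a (n+1) ≠ 0 := hnz (n+1) (by omega) hn1
      rcases Nat.eq_zero_or_pos n with rfl | hpos
      · -- base case n+1 = 1
        simp only [Nat.zero_add] at hb ⊢
        have hQ1 : cfQ lam a 1 = (a 1 : ℝ) * lam := rfl
        have hQ0 : cfQ lam a 0 = 1 := rfl
        obtain ⟨ε, hε, hεb⟩ : ∃ ε : ℤ, (ε = 1 ∨ ε = -1) ∧ 1 ≤ ε * a 1 := by
          rcases lt_or_gt_of_ne hb with h | h
          · exact ⟨-1, Or.inr rfl, by omega⟩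
          · exact ⟨1, Or.inl rfl, by omega⟩
        have hQ1ne : cfQ lam a 1 ≠ 0 := by
          rw [hQ1]
          have : (a 1 : ℝ) ≠ 0 := by exact_mod_cast hb
          positivity
        refine ⟨hQ1ne, fun _ => ?_⟩
        rcases (by omega : ε * a 1 = 1 ∨ 2 ≤ ε * a 1) with h1 | h2
        · refine ⟨ε, 1, hε, hh1, le_rfl, by omega, ?_, ?_⟩
          · intro j hj
            have : j = 0 := by omega
            subst this
            simp only [Nat.sub_zero]
            rcases hε with rfl | rfl <;> omega
          · have hcalc : (ε:ℝ) * (cfQ lam a 1 * cfQ lam a 0) = lam := by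
              rw [hQ1, hQ0]
              have : ((ε * a 1 : ℤ) : ℝ) = 1 := by exact_mod_cast h1
              push_cast at this ⊢
              nlinarith [this]
            simp only [Nat.sub_self, hQ0, hcalc]
            push_cast
            norm_num
            rw [div_lt_iff₀ hs2]
            nlinarith [hs3eq, hsθ]
        · refine ⟨ε, 0, hε, by omega, by omega, by omega, by omega, ?_⟩
          have hcalc : (ε:ℝ) * (cfQ lam a 1 * cfQ lam a 0) = ((ε * a 1 : ℤ):ℝ) * lam := by
            rw [hQ1, hQ0]; push_cast; ring
          have h2R : (2:ℝ) ≤ ((ε * a 1 : ℤ):ℝ) := by exact_mod_cast h2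
          have hne : cfQ lam a (1-1) = 1 := hQ0
          rw [hne]
          push_cast
          norm_num
          rw [hQ1]
          have hd : Real.sin (2*θ)/Real.sin θ = lam := by rw [hsin2]; field_simp
          have he : (ε:ℝ) * ((a 1:ℝ) * lam) = ((ε * a 1:ℤ):ℝ) * lam := by push_cast; ring
          rw [hd, he]
          nlinarith [h2R, hlampos]
      · -- inductive step: n = m+1
        obtain ⟨m, rfl⟩ : ∃ m, n = m + 1 := ⟨n-1, by omega⟩
        obtain ⟨hQn, hinv⟩ := ih hnN
        obtain ⟨ε, k, hε, hkh, hkn, hεa, hrunk, hlt⟩ := hinv (by omega)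
        simp only [Nat.add_sub_cancel] at hlt
        set Qm := cfQ lam a m with hQmdef
        set Qn := cfQ lam a (m+1) with hQndef
        set b := a (m+2) with hbdef
        have hbne : b ≠ 0 := hb
        have hQn1eq : cfQ lam a (m+2) = (b : ℝ) * lam * Qn - Qm := rfl
        have hε2 : (ε:ℝ) * (ε:ℝ) = 1 := by rcases hε with rfl | rfl <;> norm_num
        have hSk1 : 0 < Real.sin (((k:ℝ)+1)*θ) := by
          have := hS (k+1) (by omega) (by omega); push_cast at this; exact this
        have hSk2 : 0 < Real.sin (((k:ℝ)+2)*θ) := by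
          have := hS (k+2) (by omega) (by omega); push_cast at this; exact this
        set c := Real.sin (((k:ℝ)+2)*θ) / Real.sin (((k:ℝ)+1)*θ) with hcdef
        have hc : 0 < c := div_pos hSk2 hSk1
        have hcge : lam/2 ≤ c := by
          rw [hcdef, le_div_iff₀ hSk1]
          have := hcos (k+1) (by omega) (by omega)
          push_cast at this
          rw [show ((k:ℝ)+2)*θ = ((k:ℝ)+1+1)*θ by ring]
          exact this
        have hw : 0 < Qn^2 := sq_pos_of_ne_zero hQn
        have hupos : 0 < (ε:ℝ)*(Qn*Qm) :=
          lt_of_le_of_lt (mul_nonneg hc.le (sq_nonneg Qm)) hlt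
        have hu2 : ((ε:ℝ)*(Qn*Qm))^2 = Qm^2 * Qn^2 := by
          have : ((ε:ℝ)*(Qn*Qm))^2 = ((ε:ℝ)*(ε:ℝ)) * (Qm^2 * Qn^2) := by ring
          rw [this, hε2, one_mul]
        have hv : 0 < Qm^2 := aux_v_pos hu2 hupos hw
        have hwcu : c * ((ε:ℝ)*(Qn*Qm)) < Qn^2 := aux_wcu hu2 hlt hupos hv
        have hQQ : ∀ x : ℝ, (ε:ℝ) * ((x * lam * Qn - Qm) * Qn) =
            ((ε:ℝ) * x) * lam * Qn^2 - (ε:ℝ)*(Qn*Qm) := by intro x; ring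
        have hdiv : Real.sin (2*θ) / Real.sin θ = lam := by
          rw [hsin2]; field_simp
        have hεb0 : ε*b ≠ 0 := by rcases hε with rfl | rfl <;> simpa using hbne
        rcases (by omega : ε*b = 1 ∨ 2 ≤ ε*b ∨ ε*b = -1 ∨ ε*b ≤ -2) with h1 | h2 | h3 | h4
        · -- same sign, digit is ε : extend run
          have hbeq : b = ε := by rcases hε with rfl | rfl <;> omega
          have hkh' : k + 1 ≤ hQ q := by
            by_contra hcon
            have hkeq : k = hQ q := by omega
            refine hrun (m+2) hn1 (by omega) ε hε (fun j hj => ?_)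
            rcases Nat.eq_zero_or_pos j with rfl | hj1
            · simpa using hbeq
            · have h5 := hrunk (j-1) (by omega)
              have h6 : m + 2 - j = m + 1 - (j-1) := by omega
              rw [h6]; exact h5
          have hSk3 : 0 < Real.sin (((k:ℝ)+1+2)*θ) := by
            have h5 := hS (k+3) (by omega) (by omega)
            have h6 : ((k+3 : ℕ):ℝ) * θ = ((k:ℝ)+1+2)*θ := by push_cast; ring
            rwa [h6] at h5
          have hSk2' : 0 < Real.sin (((k:ℝ)+1+1)*θ) := by
            have h5 := hS (k+2) (by omega) (by omega)
            have h6 : ((k+2 : ℕ):ℝ) * θ = ((k:ℝ)+1+1)*θ := by push_cast; ring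
            rwa [h6] at h5
          set c' := Real.sin (((k:ℝ)+1+2)*θ) / Real.sin (((k:ℝ)+1+1)*θ) with hc'def
          have hc' : 0 < c' := div_pos hSk3 hSk2'
          have hcc' : c * c' = lam * c - 1 := by
            have hr := hrec (((k:ℝ)+2)*θ)
            rw [show ((k:ℝ)+2)*θ + θ = ((k:ℝ)+1+2)*θ by ring,
              show ((k:ℝ)+2)*θ - θ = ((k:ℝ)+1)*θ by ring] at hr
            have he : Real.sin (((k:ℝ)+1+1)*θ) = Real.sin (((k:ℝ)+2)*θ) := by ring_nf
            rw [hcdef, hc'def, he, hr]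
            rw [div_mul_div_comm, mul_comm (Real.sin (((k:ℝ)+2)*θ)),
              mul_div_mul_right _ _ hSk2.ne', sub_div, div_self hSk1.ne', mul_div_assoc]
          have hεQ : (ε:ℝ) * (cfQ lam a (m+2) * Qn) = lam * Qn^2 - (ε:ℝ)*(Qn*Qm) := by
            rw [hQn1eq, hbeq]
            push_cast
            linear_combination (lam * Qn^2) * hε2
          have hineq : c' * Qn^2 < (ε:ℝ) * (cfQ lam a (m+2) * Qn) := by
            rw [hεQ]
            exact aux_caseA hc hcc' hwcu
          have hQn1ne : cfQ lam a (m+2) ≠ 0 := by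
            intro h0
            rw [h0] at hineq
            have hpos2 : 0 < c' * Qn^2 := mul_pos hc' hw
            simp at hineq
            linarith
          refine ⟨hQn1ne, fun _ => ⟨ε, k+1, hε, hkh', by omega, by omega, ?_, ?_⟩⟩
          · intro j hj
            rcases Nat.eq_zero_or_pos j with rfl | hj1
            · simpa using hbeq
            · have h5 := hrunk (j-1) (by omega)
              have h6 : m + 2 - j = m + 1 - (j-1) := by omega
              rw [h6]; exact h5
          · simp only [Nat.add_sub_cancel]
            push_cast
            exact hineq
        · -- same sign, digit at least 2
          have hεQ : (ε:ℝ) * (cfQ lam a (m+2) * Qn) =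
              ((ε*b:ℤ):ℝ) * lam * Qn^2 - (ε:ℝ)*(Qn*Qm) := by
            rw [hQn1eq]; push_cast; ring
          have hεb2 : (2:ℝ) ≤ ((ε*b:ℤ):ℝ) := by exact_mod_cast h2
          have hineq : lam * Qn^2 < (ε:ℝ) * (cfQ lam a (m+2) * Qn) := by
            rw [hεQ]
            exact aux_caseB hc hcge hwcu hupos hlam2 hlampos hw hεb2
          have hQn1ne : cfQ lam a (m+2) ≠ 0 := by
            intro h0
            rw [h0] at hineq
            have hpos2 : 0 < lam * Qn^2 := mul_pos hlampos hw
            simp at hineq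
            linarith
          refine ⟨hQn1ne, fun _ => ⟨ε, 0, hε, by omega, by omega, by omega, by omega, ?_⟩⟩
          simp only [Nat.add_sub_cancel]
          push_cast
          norm_num
          rw [hdiv]
          exact hineq
        · -- opposite sign, digit is -ε
          have hbeq : b = -ε := by rcases hε with rfl | rfl <;> omega
          have hεQ : ((-ε : ℤ):ℝ) * (cfQ lam a (m+2) * Qn) = lam * Qn^2 + (ε:ℝ)*(Qn*Qm) := by
            rw [hQn1eq, hbeq]
            push_cast
            linear_combination (lam * Qn^2) * hε2
          have hc2le : Real.sin (3*θ)/Real.sin (2*θ) ≤ lam := by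
            rw [div_le_iff₀ hs2]
            linarith [hs3eq, hsθ]
          have hineq : Real.sin (3*θ)/Real.sin (2*θ) * Qn^2 <
              ((-ε:ℤ):ℝ) * (cfQ lam a (m+2) * Qn) := by
            rw [hεQ]
            exact aux_caseC hc2le hw hupos
          have hQn1ne : cfQ lam a (m+2) ≠ 0 := by
            intro h0
            rw [h0] at hineq
            have hpos2 : 0 < Real.sin (3*θ)/Real.sin (2*θ) * Qn^2 :=
              mul_pos (div_pos hs3 hs2) hw
            simp at hineq
            linarith
          refine ⟨hQn1ne, fun _ => ⟨-ε, 1, ?_, hh1, by omega,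
            by rcases hε with rfl | rfl <;> omega, ?_, ?_⟩⟩
          · rcases hε with rfl | rfl
            · exact Or.inr rfl
            · exact Or.inl (by norm_num)
          · intro j hj
            have hj0 : j = 0 := by omega
            subst hj0
            simpa using hbeq
          · simp only [Nat.add_sub_cancel]
            have harg1 : ((1:ℕ):ℝ) + 2 = 3 := by norm_num
            have harg2 : ((1:ℕ):ℝ) + 1 = 2 := by norm_num
            rw [harg1, harg2]
            push_cast at hineq ⊢
            linarith [hineq]
        · -- opposite sign, digit at most -2
          have hεQ : ((-ε : ℤ):ℝ) * (cfQ lam a (m+2) * Qn) =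
              ((-(ε*b):ℤ):ℝ) * lam * Qn^2 + (ε:ℝ)*(Qn*Qm) := by
            rw [hQn1eq]; push_cast; ring
          have hεb2 : (2:ℝ) ≤ ((-(ε*b):ℤ):ℝ) := by
            exact_mod_cast (by omega : (2:ℤ) ≤ -(ε*b))
          have hineq : lam * Qn^2 < ((-ε:ℤ):ℝ) * (cfQ lam a (m+2) * Qn) := by
            rw [hεQ]
            exact aux_caseD hεb2 hlampos hw hupos
          have hQn1ne : cfQ lam a (m+2) ≠ 0 := by
            intro h0
            rw [h0] at hineq
            have hpos2 : 0 < lam * Qn^2 := mul_pos hlampos hw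
            simp at hineq
            linarith
          refine ⟨hQn1ne, fun _ => ⟨-ε, 0, ?_, by omega, by omega,
            by rcases hε with rfl | rfl <;> omega, by omega, ?_⟩⟩
          · rcases hε with rfl | rfl
            · exact Or.inr rfl
            · exact Or.inl (by norm_num)
          · simp only [Nat.add_sub_cancel]
            push_cast at hineq ⊢
            norm_num
            rw [hdiv]
            linarith [hineq]
  exact fun n hn => (main n hn).1


lemma cfQ_congr (lam : ℝ) (A B : ℕ → ℤ) : ∀ n, (∀ i, i ≤ n → A i = B i) →
    cfQ lam A n = cfQ lam B n
  | 0, h => rfl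
  | 1, h => by simp only [cfQ, h 1 le_rfl]
  | (n+2), h => by
      have h1 := cfQ_congr lam A B (n+1) (fun i hi => h i (by omega))
      have h2 := cfQ_congr lam A B n (fun i hi => h i (by omega))
      simp only [cfQ, h (n+2) le_rfl, h1, h2]

lemma cfP_congr (lam : ℝ) (A B : ℕ → ℤ) : ∀ n, (∀ i, i ≤ n → A i = B i) →
    cfP lam A n = cfP lam B n
  | 0, h => by simp only [cfP, h 0 le_rfl]
  | 1, h => by simp only [cfP, h 1 le_rfl, h 0 (by omega)]
  | (n+2), h => by
      have h1 := cfP_congr lam A B (n+1) (fun i hi => h i (by omega))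
      have h2 := cfP_congr lam A B n (fun i hi => h i (by omega))
      simp only [cfP, h (n+2) le_rfl, h1, h2]

lemma cfQ_rec (lam : ℝ) (A : ℕ → ℤ) (n : ℕ) (hn : 2 ≤ n) :
    cfQ lam A n = (A n : ℝ) * lam * cfQ lam A (n-1) - cfQ lam A (n-2) := by
  obtain ⟨m, rfl⟩ : ∃ m, n = m + 2 := ⟨n - 2, by omega⟩
  rfl

lemma cfP_rec (lam : ℝ) (A : ℕ → ℤ) (n : ℕ) (hn : 2 ≤ n) :
    cfP lam A n = (A n : ℝ) * lam * cfP lam A (n-1) - cfP lam A (n-2) := by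
  obtain ⟨m, rfl⟩ : ∃ m, n = m + 2 := ⟨n - 2, by omega⟩
  rfl

lemma flip_generic (lam θ p : ℝ) (hlam : lam = 2 * Real.cos θ) (h : ℕ) (hh : 1 ≤ h)
    (x X : ℕ → ℝ)
    (hX0 : X 0 = x 0 - lam * p)
    (hx1 : x 1 = lam * x 0 - p) (hX1 : X 1 = -lam * X 0 - p)
    (hx : ∀ j, 1 ≤ j → j + 1 ≤ h → x (j+1) = lam * x j - x (j-1))
    (hX : ∀ j, 1 ≤ j → j + 1 ≤ h → X (j+1) = -lam * X j - X (j-1))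
    (hzero : Real.cos (((h:ℝ)+1)*θ) = 0) :
    X h = (-1:ℝ)^h * x h := by
  subst hlam
  have key : ∀ j, 1 ≤ j → j ≤ h →
      X j = (-1:ℝ)^j * (x j - 2*Real.cos (((j:ℝ)+1)*θ) * p) ∧
      X (j-1) = (-1:ℝ)^(j-1) * (x (j-1) - 2*Real.cos ((j:ℝ)*θ) * p) := by
    intro j
    induction j with
    | zero => intro h1; exact absurd h1 (by norm_num)
    | succ j ihj =>
      intro _ hjh
      rcases Nat.eq_zero_or_pos j with rfl | hj
      · constructor
        · have hcos2 : Real.cos (2*θ) = 2*(Real.cos θ)^2 - 1 := Real.cos_two_mul θ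
          rw [hX1, hX0]
          have harg : (((0:ℕ)+1:ℕ):ℝ) + 1 = 2 := by push_cast; ring
          rw [show ((((0:ℕ)+1:ℕ):ℝ)+1)*θ = 2*θ by rw [harg]]
          have hx0 : 2*Real.cos θ * x 0 = x 1 + p := by rw [hx1]; ring
          rw [hcos2]
          push_cast
          nlinarith [hx0]
        · rw [hX0]
          have harg : (((0:ℕ)+1:ℕ):ℝ) * θ = θ := by push_cast; ring
          rw [show ((0:ℕ)+1)-1 = 0 from rfl, harg]
          push_cast
          ring
      · obtain ⟨i, rfl⟩ : ∃ i, j = i + 1 := ⟨j - 1, by omega⟩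
        obtain ⟨e1, e0⟩ := ihj (by omega) (by omega)
        have hd : Real.cos (((i:ℝ)+3)*θ) =
            2*Real.cos θ * Real.cos (((i:ℝ)+2)*θ) - Real.cos (((i:ℝ)+1)*θ) := by
          have := cos_rec θ (((i:ℝ)+2)*θ)
          rw [show ((i:ℝ)+2)*θ + θ = ((i:ℝ)+3)*θ by ring,
            show ((i:ℝ)+2)*θ - θ = ((i:ℝ)+1)*θ by ring] at this
          exact this
        have hXr := hX (i+1) (by omega) (by omega)
        have hxr := hx (i+1) (by omega) (by omega)
        simp only [Nat.add_sub_cancel] at hXr hxr e0 ⊢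
        constructor
        · rw [hXr, e1, e0, hxr]
          push_cast
          ring_nf
          ring_nf at hd
          linear_combination ((-1:ℝ)^i * p * 2) * hd
        · rw [e1]
          push_cast
          ring
  obtain ⟨e1, _⟩ := key h hh le_rfl
  rw [e1]
  have harg : (((h:ℕ):ℝ)+1)*θ = ((h:ℝ)+1)*θ := by push_cast; ring
  rw [harg, hzero]
  ring



lemma flip_tail_one (q : ℕ) (hq : 4 ≤ q) (hqe : Even q) (A B : ℕ → ℤ) (N : ℕ) (hN : 1 ≤ N)
    (hA1 : ∀ j, 1 ≤ j → j ≤ hQ q → A (N + j) = 1)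
    (hB1 : ∀ j, 1 ≤ j → j ≤ hQ q → B (N + j) = -1)
    (g : (ℕ → ℤ) → ℕ → ℝ)
    (hrec : ∀ (C : ℕ → ℤ) n, 2 ≤ n → g C n = (C n : ℝ) * lamq q * g C (n-1) - g C (n-2))
    (hcongr : ∀ n, n ≤ N - 1 → g A n = g B n)
    (hbase : g B N = g A N - lamq q * g A (N-1)) :
    g B (N + hQ q) = (-1:ℝ)^(hQ q) * g A (N + hQ q) := by
  have twoh := two_hQ hq hqe
  have hh1 : 1 ≤ hQ q := by omega
  have hzero : Real.cos (((hQ q:ℝ)+1)*(Real.pi / q)) = 0 := by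
    rw [half_pi_eq hq hqe]
    exact Real.cos_pi_div_two
  refine flip_generic (lamq q) (Real.pi / q) (g A (N-1)) rfl (hQ q) hh1
    (fun j => g A (N+j)) (fun j => g B (N+j)) ?_ ?_ ?_ ?_ ?_ hzero
  · simpa using hbase
  · show g A (N+1) = lamq q * g A (N+0) - g A (N-1)
    rw [hrec A (N+1) (by omega), hA1 1 le_rfl hh1]
    have e1 : N+1-1 = N+0 := by omega
    have e2 : N+1-2 = N-1 := by omega
    rw [e1, e2]
    push_cast
    ring
  · show g B (N+1) = -lamq q * g B (N+0) - g A (N-1)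
    rw [hrec B (N+1) (by omega), hB1 1 le_rfl hh1]
    have e1 : N+1-1 = N+0 := by omega
    have e2 : N+1-2 = N-1 := by omega
    rw [e1, e2, ← hcongr (N-1) le_rfl]
    push_cast
    ring
  · intro j hj hjh
    show g A (N+(j+1)) = lamq q * g A (N+j) - g A (N+(j-1))
    rw [hrec A (N+(j+1)) (by omega), hA1 (j+1) (by omega) (by omega)]
    have e1 : N+(j+1)-1 = N+j := by omega
    have e2 : N+(j+1)-2 = N+(j-1) := by omega
    rw [e1, e2]
    push_cast
    ring
  · intro j hj hjh
    show g B (N+(j+1)) = -lamq q * g B (N+j) - g B (N+(j-1))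
    rw [hrec B (N+(j+1)) (by omega), hB1 (j+1) (by omega) (by omega)]
    have e1 : N+(j+1)-1 = N+j := by omega
    have e2 : N+(j+1)-2 = N+(j-1) := by omega
    rw [e1, e2]
    push_cast
    ring


lemma den_list (q : ℕ) (hq : 4 ≤ q) (hqe : Even q) (a0 : ℤ) (M : List ℤ)
    (hnz : ∀ x ∈ M, x ≠ 0) (hreg : RegularList q M) :
    cfQ (lamq q) (fun i => ((a0 :: M).getD i 0)) M.length ≠ 0 := by
  set A := fun i => ((a0 :: M).getD i 0) with hA
  have hdig : ∀ i, 1 ≤ i → A i = M.getD (i-1) 0 := by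
    intro i h1
    obtain ⟨j, rfl⟩ : ∃ j, i = j + 1 := ⟨i-1, by omega⟩
    simp [hA]
  apply core_den q hq hqe A M.length _ _ M.length le_rfl
  · intro i h1 h2
    rw [hdig i h1]
    have hlt : i - 1 < M.length := by omega
    rw [List.getD_eq_getElem _ _ hlt]
    exact hnz _ (List.getElem_mem hlt)
  · intro n hnN hn1 ε hε hall
    refine hreg (List.replicate (hQ q) ε ++ [ε]) ?_
      ((forb_even hqe).mpr ⟨ε, 1, hε, le_rfl, by rw [mul_one]⟩)
    rw [infix_iff_getD]
    refine ⟨n - (hQ q + 1), by rw [repApp_length]; omega, ?_⟩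
    intro j hj
    rw [repApp_length] at hj
    rw [repApp_getD _ _ _ _ (by omega)]
    have h5 := hall (hQ q - j) (by omega)
    rw [hdig _ (by omega)] at h5
    rw [show n - (hQ q + 1) + j = n - (hQ q - j) - 1 by omega]
    rw [← h5]
    split <;> rfl

/-- For even `q ≥ 4`: if `(a₁,…,aₙ,(1)^{h_q})` is `q`-regular, then `aₙ ≠ 1`, the sequence
`(a₁,…,aₙ₋₁,aₙ-1,(-1)^{h_q})` is `q`-regular, both finite continued fractions have nonzero
last denominator, and `[a₀;a₁,…,aₙ,(1)^{h_q}] = [a₀;a₁,…,aₙ₋₁,aₙ-1,(-1)^{h_q}]`. -/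
theorem stmt3 (q : ℕ) (hq : 4 ≤ q) (hqe : Even q) (a0 : ℤ) (L : List ℤ) (hL : L ≠ [])
    (hnz : ∀ x ∈ L, x ≠ 0)
    (hreg : RegularList q (L ++ List.replicate (hQ q) 1)) :
    L.getLast hL ≠ 1 ∧
    RegularList q (L.dropLast ++ (L.getLast hL - 1) :: List.replicate (hQ q) (-1)) ∧
    cfDenList (lamq q) a0 (L ++ List.replicate (hQ q) 1) ≠ 0 ∧
    cfDenList (lamq q) a0 (L.dropLast ++ (L.getLast hL - 1) :: List.replicate (hQ q) (-1)) ≠ 0 ∧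
    cfValList (lamq q) a0 (L ++ List.replicate (hQ q) 1) =
      cfValList (lamq q) a0
        (L.dropLast ++ (L.getLast hL - 1) :: List.replicate (hQ q) (-1)) := by
  have twoh := two_hQ hq hqe
  have hh1 : 1 ≤ hQ q := by omega
  set N := L.length with hNdef
  have hN1 : 1 ≤ N := by
    rw [hNdef]
    exact List.length_pos_iff.mpr hL
  set a := L.getLast hL with hadef
  have ha0 : a ≠ 0 := hnz a (List.getLast_mem hL)
  have hgetA : L.getD (N-1) 0 = a := by
    rw [List.getD_eq_getElem _ _ (by omega), hadef, List.getLast_eq_getElem]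
  -- getD facts for L1 = L ++ 1^h
  have hL1len : (L ++ List.replicate (hQ q) 1).length = N + hQ q := by simp [hNdef]
  have hL1lt : ∀ p, p < N → (L ++ List.replicate (hQ q) 1).getD p 0 = L.getD p 0 :=
    fun p hp => List.getD_append _ _ _ _ hp
  have hL1ge : ∀ p, N ≤ p → p < N + hQ q → (L ++ List.replicate (hQ q) 1).getD p 0 = 1 := by
    intro p h1 h2
    rw [List.getD_append_right _ _ _ _ (by omega),
      List.getD_eq_getElem _ _ (by simp; omega), List.getElem_replicate]
  -- claim 1 : a ≠ 1
  have hane : a ≠ 1 := by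
    intro ha1
    refine hreg (List.replicate (hQ q) 1 ++ [1]) ?_
      ((forb_even hqe).mpr ⟨1, 1, Or.inl rfl, le_rfl, by norm_num⟩)
    rw [infix_iff_getD]
    refine ⟨N-1, by rw [repApp_length, hL1len]; omega, ?_⟩
    intro j hj
    rw [repApp_length] at hj
    have hBj : (List.replicate (hQ q) (1:ℤ) ++ [1]).getD j 0 = 1 := by
      rw [repApp_getD _ _ _ _ (by omega)]; split <;> rfl
    rw [hBj]
    rcases Nat.eq_zero_or_pos j with rfl | hjpos
    · rw [Nat.add_zero, hL1lt _ (by omega), hgetA, ha1]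
    · rw [hL1ge _ (by omega) (by omega)]
  -- getD facts for L2
  have hdrop : ∀ p, p < N - 1 → L.dropLast.getD p 0 = L.getD p 0 := by
    intro p hp
    have h1 : p < L.dropLast.length := by rw [List.length_dropLast]; omega
    have h2 : p < L.length := by omega
    rw [List.getD_eq_getElem _ _ h1, List.getD_eq_getElem _ _ h2, List.getElem_dropLast]
  have hdlen : L.dropLast.length = N - 1 := by rw [List.length_dropLast]
  have hL2len : (L.dropLast ++ (a - 1) :: List.replicate (hQ q) (-1)).length = N + hQ q := by
    simp only [List.length_append, List.length_cons, List.length_replicate, hdlen]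
    omega
  have hL2lt : ∀ p, p < N-1 →
      (L.dropLast ++ (a - 1) :: List.replicate (hQ q) (-1)).getD p 0 = L.getD p 0 := by
    intro p hp
    rw [List.getD_append _ _ _ _ (by omega), hdrop p hp]
  have hL2eq : (L.dropLast ++ (a - 1) :: List.replicate (hQ q) (-1)).getD (N-1) 0 = a - 1 := by
    rw [List.getD_append_right _ _ _ _ (by omega), hdlen, Nat.sub_self]
    rfl
  have hL2gt : ∀ p, N-1 < p → p < N + hQ q →
      (L.dropLast ++ (a - 1) :: List.replicate (hQ q) (-1)).getD p 0 = -1 := by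
    intro p h1 h2
    rw [List.getD_append_right _ _ _ _ (by omega), hdlen,
      show p - (N-1) = (p - N + 1 - 1) + 1 by omega, List.getD_cons_succ,
      List.getD_eq_getElem _ _ (by simp; omega), List.getElem_replicate]
  -- claim 2 : regularity of L2
  have hreg2 : RegularList q (L.dropLast ++ (a - 1) :: List.replicate (hQ q) (-1)) := by
    intro B hinf hforb
    obtain ⟨ε, m, hε, hm, rfl⟩ := (forb_even hqe).mp hforb
    rw [infix_iff_getD] at hinf
    obtain ⟨i, hilen, hval⟩ := hinf
    rw [repApp_length, hL2len] at hilen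
    have hiN : i ≤ N - 1 := by omega
    have hvals : ∀ j, j ≤ hQ q →
        (if j < hQ q then ε else ε * m) =
          (L.dropLast ++ (a - 1) :: List.replicate (hQ q) (-1)).getD (i+j) 0 := by
      intro j hj
      have := hval j (by rw [repApp_length]; omega)
      rwa [repApp_getD _ _ _ _ hj] at this
    have hlast := hvals (hQ q) le_rfl
    rw [if_neg (lt_irrefl _)] at hlast
    rcases hε with rfl | rfl
    · -- ε = 1
      rcases (by omega : i + hQ q < N-1 ∨ i + hQ q = N-1 ∨ N-1 < i + hQ q) with hc | hc | hc
      · refine hreg (List.replicate (hQ q) 1 ++ [1 * m]) ?_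
          ((forb_even hqe).mpr ⟨1, m, Or.inl rfl, hm, rfl⟩)
        rw [infix_iff_getD]
        refine ⟨i, by rw [repApp_length, hL1len]; omega, ?_⟩
        intro j hj
        rw [repApp_length] at hj
        rw [repApp_getD _ _ _ _ (by omega), hL1lt _ (by omega), ← hL2lt _ (by omega)]
        exact hvals j (by omega)
      · have ham : 1 * m = a - 1 := by rw [hlast, hc, hL2eq]
        refine hreg (List.replicate (hQ q) 1 ++ [1 * a]) ?_
          ((forb_even hqe).mpr ⟨1, a, Or.inl rfl, by omega, rfl⟩)
        rw [infix_iff_getD]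
        refine ⟨i, by rw [repApp_length, hL1len]; omega, ?_⟩
        intro j hj
        rw [repApp_length] at hj
        rw [repApp_getD _ _ _ _ (by omega)]
        rcases (by omega : j < hQ q ∨ j = hQ q) with hjlt | rfl
        · rw [if_pos hjlt, hL1lt _ (by omega), ← hL2lt _ (by omega)]
          have := hvals j (by omega)
          rwa [if_pos hjlt] at this
        · rw [if_neg (lt_irrefl _), hL1lt _ (by omega), show i + hQ q = N - 1 from hc, hgetA]
          ring
      · rw [hL2gt _ hc (by omega)] at hlast
        omega
    · -- ε = -1
      have hnotmid : ¬ (i ≤ N-1 ∧ N-1 < i + hQ q) := by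
        rintro ⟨h1, h2⟩
        have hj := hvals (N-1-i) (by omega)
        rw [if_pos (by omega), show i + (N-1-i) = N-1 by omega, hL2eq] at hj
        omega
      rcases (by omega : i + hQ q < N-1 ∨ i + hQ q = N-1 ∨ N-1 < i + hQ q) with hc | hc | hc
      · refine hreg (List.replicate (hQ q) (-1) ++ [(-1) * m]) ?_
          ((forb_even hqe).mpr ⟨-1, m, Or.inr rfl, hm, rfl⟩)
        rw [infix_iff_getD]
        refine ⟨i, by rw [repApp_length, hL1len]; omega, ?_⟩
        intro j hj
        rw [repApp_length] at hj
        rw [repApp_getD _ _ _ _ (by omega), hL1lt _ (by omega), ← hL2lt _ (by omega)]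
        exact hvals j (by omega)
      · have ham : (-1) * m = a - 1 := by rw [hlast, hc, hL2eq]
        refine hreg (List.replicate (hQ q) (-1) ++ [(-1) * (-a)]) ?_
          ((forb_even hqe).mpr ⟨-1, -a, Or.inr rfl, by omega, rfl⟩)
        rw [infix_iff_getD]
        refine ⟨i, by rw [repApp_length, hL1len]; omega, ?_⟩
        intro j hj
        rw [repApp_length] at hj
        rw [repApp_getD _ _ _ _ (by omega)]
        rcases (by omega : j < hQ q ∨ j = hQ q) with hjlt | rfl
        · rw [if_pos hjlt, hL1lt _ (by omega), ← hL2lt _ (by omega)]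
          have := hvals j (by omega)
          rwa [if_pos hjlt] at this
        · rw [if_neg (lt_irrefl _), hL1lt _ (by omega), show i + hQ q = N - 1 from hc, hgetA]
          ring
      · exact absurd ⟨hiN, hc⟩ hnotmid
  -- digit sequences
  set A := fun i => ((a0 :: (L ++ List.replicate (hQ q) 1)).getD i 0) with hAdef
  set B := fun i => ((a0 :: (L.dropLast ++ (a - 1) :: List.replicate (hQ q) (-1))).getD i 0)
    with hBdef
  have hdigA : ∀ i, 1 ≤ i → A i = (L ++ List.replicate (hQ q) 1).getD (i-1) 0 := by
    intro i h1
    obtain ⟨j, rfl⟩ : ∃ j, i = j + 1 := ⟨i-1, by omega⟩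
    simp [hAdef]
  have hdigB : ∀ i, 1 ≤ i →
      B i = (L.dropLast ++ (a - 1) :: List.replicate (hQ q) (-1)).getD (i-1) 0 := by
    intro i h1
    obtain ⟨j, rfl⟩ : ∃ j, i = j + 1 := ⟨i-1, by omega⟩
    simp [hBdef]
  have hA1 : ∀ j, 1 ≤ j → j ≤ hQ q → A (N + j) = 1 := by
    intro j h1 h2
    rw [hdigA _ (by omega), hL1ge _ (by omega) (by omega)]
  have hB1 : ∀ j, 1 ≤ j → j ≤ hQ q → B (N + j) = -1 := by
    intro j h1 h2
    rw [hdigB _ (by omega), hL2gt _ (by omega) (by omega)]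
  have hABlt : ∀ i, i ≤ N - 1 → A i = B i := by
    intro i hi
    rcases Nat.eq_zero_or_pos i with rfl | hipos
    · rfl
    · rw [hdigA _ (by omega), hdigB _ (by omega), hL1lt _ (by omega), hL2lt _ (by omega)]
  have hAN : A N = a := by
    rw [hdigA _ (by omega), hL1lt _ (by omega), hgetA]
  have hBN : B N = a - 1 := by
    rw [hdigB _ (by omega), hL2eq]
  have hcongrQ : ∀ n, n ≤ N - 1 → cfQ (lamq q) A n = cfQ (lamq q) B n :=
    fun n hn => cfQ_congr _ _ _ n (fun i hi => hABlt i (by omega))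
  have hcongrP : ∀ n, n ≤ N - 1 → cfP (lamq q) A n = cfP (lamq q) B n :=
    fun n hn => cfP_congr _ _ _ n (fun i hi => hABlt i (by omega))
  have hbaseQ : cfQ (lamq q) B N = cfQ (lamq q) A N - lamq q * cfQ (lamq q) A (N-1) := by
    rcases (by omega : N = 1 ∨ 2 ≤ N) with hN | hN2
    · rw [hN]
      have e1 : cfQ (lamq q) B 1 = (B 1 : ℝ) * lamq q := rfl
      have e2 : cfQ (lamq q) A 1 = (A 1 : ℝ) * lamq q := rfl
      have e0 : cfQ (lamq q) A 0 = 1 := rfl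
      rw [show (1:ℕ)-1 = 0 from rfl, e1, e2, e0]
      rw [hN] at hAN hBN
      rw [hAN, hBN]
      push_cast
      ring
    · rw [cfQ_rec _ B N hN2, cfQ_rec _ A N hN2, hBN, hAN,
        ← hcongrQ (N-1) le_rfl, ← hcongrQ (N-2) (by omega)]
      push_cast
      ring
  have hbaseP : cfP (lamq q) B N = cfP (lamq q) A N - lamq q * cfP (lamq q) A (N-1) := by
    rcases (by omega : N = 1 ∨ 2 ≤ N) with hN | hN2
    · rw [hN]
      have e1 : cfP (lamq q) B 1 = (B 1 : ℝ) * lamq q * ((B 0 : ℝ) * lamq q) - 1 := rfl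
      have e2 : cfP (lamq q) A 1 = (A 1 : ℝ) * lamq q * ((A 0 : ℝ) * lamq q) - 1 := rfl
      have e0 : cfP (lamq q) A 0 = (A 0 : ℝ) * lamq q := rfl
      have eAB0 : B 0 = A 0 := rfl
      rw [show (1:ℕ)-1 = 0 from rfl, e1, e2, e0, eAB0]
      rw [hN] at hAN hBN
      rw [hAN, hBN]
      push_cast
      ring
    · rw [cfP_rec _ B N hN2, cfP_rec _ A N hN2, hBN, hAN,
        ← hcongrP (N-1) le_rfl, ← hcongrP (N-2) (by omega)]
      push_cast
      ring
  have flipQ : cfQ (lamq q) B (N + hQ q) = (-1:ℝ)^(hQ q) * cfQ (lamq q) A (N + hQ q) :=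
    flip_tail_one q hq hqe A B N hN1 hA1 hB1 (fun C n => cfQ (lamq q) C n)
      (fun C n hn => cfQ_rec _ C n hn) hcongrQ hbaseQ
  have flipP : cfP (lamq q) B (N + hQ q) = (-1:ℝ)^(hQ q) * cfP (lamq q) A (N + hQ q) :=
    flip_tail_one q hq hqe A B N hN1 hA1 hB1 (fun C n => cfP (lamq q) C n)
      (fun C n hn => cfP_rec _ C n hn) hcongrP hbaseP
  have hQAne : cfQ (lamq q) A (N + hQ q) ≠ 0 := by
    have := den_list q hq hqe a0 (L ++ List.replicate (hQ q) 1) ?_ hreg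
    · rwa [hL1len] at this
    · intro x hx
      rcases List.mem_append.mp hx with h | h
      · exact hnz x h
      · rw [List.eq_of_mem_replicate h]; norm_num
  have hQBne : cfQ (lamq q) B (N + hQ q) ≠ 0 := by
    rw [flipQ]
    exact mul_ne_zero (pow_ne_zero _ (by norm_num)) hQAne
  have hden1 : cfDenList (lamq q) a0 (L ++ List.replicate (hQ q) 1) =
      cfQ (lamq q) A (N + hQ q) := by
    unfold cfDenList
    rw [hL1len]
  have hden2 : cfDenList (lamq q) a0 (L.dropLast ++ (a - 1) :: List.replicate (hQ q) (-1)) =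
      cfQ (lamq q) B (N + hQ q) := by
    unfold cfDenList
    rw [hL2len]
  refine ⟨hane, hreg2, by rw [hden1]; exact hQAne, by rw [hden2]; exact hQBne, ?_⟩
  unfold cfValList
  rw [hL1len, hL2len]
  show cfP (lamq q) A (N + hQ q) / cfQ (lamq q) A (N + hQ q) =
    cfP (lamq q) B (N + hQ q) / cfQ (lamq q) B (N + hQ q)
  rw [flipP, flipQ, mul_div_mul_left _ _ (pow_ne_zero _ (by norm_num : (-1:ℝ) ≠ 0))]
end

section
/- Let q ≥ 3. If q is even, the finite λ_q-continued fraction [0; (1)^{h_q}] (with a_0 = 0 followed by h_q entries 1) has nonzero last denominator and value −λ_q/2. If q is odd, the finite λ_q-continued fraction [0; (1)^{h_q}, 2, (1)^{h_q}] has nonzero last denominator and value −λ_q/2. -/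
open Filter Topology

private lemma aux_getD_rep (h j : ℕ) (hj : j < h) :
    (List.replicate h (1:ℤ)).getD j 0 = 1 := by
  rw [List.getD_eq_getElem _ _ (by simpa using hj)]
  simp

private lemma aux_sin2 (x : ℝ) : Real.sin (2*x) = 2*Real.sin x*Real.cos x := by
  rw [show (2:ℝ)*x = x + x by ring, Real.sin_add]; ring
private lemma aux_cos2 (x : ℝ) : Real.cos (2*x) = Real.cos x^2 - Real.sin x^2 := by
  rw [show (2:ℝ)*x = x + x by ring, Real.cos_add]; ring
private lemma aux_sin3 (x : ℝ) :
    Real.sin (3*x) = 3*Real.sin x*Real.cos x^2 - Real.sin x^3 := by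
  rw [show (3:ℝ)*x = 2*x + x by ring, Real.sin_add, aux_sin2, aux_cos2]; ring
private lemma aux_cos3 (x : ℝ) :
    Real.cos (3*x) = Real.cos x^3 - 3*Real.sin x^2*Real.cos x := by
  rw [show (3:ℝ)*x = 2*x + x by ring, Real.cos_add, aux_sin2, aux_cos2]; ring
private lemma aux_sin5 (x : ℝ) :
    Real.sin (5*x) = 5*Real.sin x*Real.cos x^4 - 10*Real.sin x^3*Real.cos x^2 + Real.sin x^5 := by
  rw [show (5:ℝ)*x = 2*x + 3*x by ring, Real.sin_add, aux_sin2, aux_cos2, aux_sin3, aux_cos3]; ring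
private lemma aux_cos5 (x : ℝ) :
    Real.cos (5*x) = Real.cos x^5 - 10*Real.sin x^2*Real.cos x^3 + 5*Real.sin x^4*Real.cos x := by
  rw [show (5:ℝ)*x = 2*x + 3*x by ring, Real.cos_add, aux_sin2, aux_cos2, aux_sin3, aux_cos3]; ring

private lemma aux_phase1 (θ : ℝ) (A : ℕ → ℤ) (h : ℕ) (hA0 : A 0 = 0)
    (hA : ∀ j, 1 ≤ j → j ≤ h → A j = 1) :
    ∀ n, n ≤ h → ∀ r : ℝ, r = (n:ℝ) →
      cfQ (2*Real.cos θ) A n * Real.sin θ = Real.sin ((r+1)*θ) ∧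
      cfP (2*Real.cos θ) A n * Real.sin θ = -Real.sin (r*θ) := by
  intro n
  induction n using Nat.strong_induction_on with
  | _ n ih =>
    intro hle r hr
    by_cases c0 : n = 0
    · subst c0
      have : r = 0 := by simpa using hr
      subst this
      constructor
      · simp [cfQ]
      · simp [cfP, hA0]
    by_cases c1 : n = 1
    · subst c1
      have : r = 1 := by simpa using hr
      subst this
      have hA1 : A 1 = 1 := hA 1 le_rfl hle
      constructor
      · simp only [cfQ, hA1]
        rw [show ((1:ℝ)+1)*θ = θ + θ by ring, Real.sin_add]
        push_cast
        ring
      · simp only [cfP, hA1, hA0]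
        push_cast
        simp
    obtain ⟨n, rfl⟩ : ∃ m, n = m + 2 := ⟨n - 2, by omega⟩
    have hr' : r = (n:ℝ)+1+1 := by rw [hr]; push_cast; ring
    subst hr'
    obtain ⟨h1Q, h1P⟩ := ih (n+1) (by omega) (by omega) ((n:ℝ)+1) (by push_cast; ring)
    obtain ⟨h0Q, h0P⟩ := ih n (by omega) (by omega) (n:ℝ) rfl
    have hd : A (n+2) = 1 := hA (n+2) (by omega) hle
    constructor
    · simp only [cfQ, hd]
      push_cast
      rw [show ((n:ℝ)+1+1+1)*θ = ((n:ℝ)+1+1)*θ + θ by ring, Real.sin_add]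
      rw [show ((n:ℝ)+1)*θ = ((n:ℝ)+1+1)*θ - θ by ring, Real.sin_sub] at h0Q
      linear_combination (2*Real.cos θ) * h1Q - h0Q
    · simp only [cfP, hd]
      push_cast
      rw [show ((n:ℝ)+1+1)*θ = ((n:ℝ)+1)*θ + θ by ring, Real.sin_add]
      rw [show (n:ℝ)*θ = ((n:ℝ)+1)*θ - θ by ring, Real.sin_sub] at h0P
      linear_combination (2*Real.cos θ) * h1P - h0P

private lemma aux_phase2 (φ : ℝ) (A : ℕ → ℤ) (m : ℕ)
    (hA2 : A (m+2) = 2)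
    (hA : ∀ j, m+3 ≤ j → j ≤ 2*m+3 → A j = 1)
    (hQh : cfQ (2*Real.cos (2*φ)) A (m+1) * Real.sin (2*φ) = Real.cos φ)
    (hQm : cfQ (2*Real.cos (2*φ)) A m * Real.sin (2*φ) = Real.cos (3*φ))
    (hPh : cfP (2*Real.cos (2*φ)) A (m+1) * Real.sin (2*φ) = -Real.cos (3*φ))
    (hPm : cfP (2*Real.cos (2*φ)) A m * Real.sin (2*φ) = -Real.cos (5*φ)) :
    ∀ k, k ≤ m+1 → ∀ r : ℝ, r = (k:ℝ) →
      cfQ (2*Real.cos (2*φ)) A (m+2+k) * (Real.sin (2*φ) * Real.sin φ)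
          = Real.cos φ * Real.sin ((2*r+3)*φ) ∧
      cfP (2*Real.cos (2*φ)) A (m+2+k) * (Real.sin (2*φ) * Real.sin φ)
          = -(2*Real.cos (2*φ) * Real.sin φ * Real.cos ((2*r+3)*φ))
            - Real.cos φ * Real.sin ((2*r+1)*φ) := by
  intro k
  induction k using Nat.strong_induction_on with
  | _ k ih =>
    intro hle r hr
    by_cases c0 : k = 0
    · subst c0
      have : r = 0 := by simpa using hr
      subst this
      rw [show m+2+0 = m+2 by omega,
        show (2*(0:ℝ)+3)*φ = 3*φ by ring, show (2*(0:ℝ)+1)*φ = φ by ring]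
      constructor
      · simp only [cfQ, hA2]
        push_cast
        simp only [aux_sin2, aux_cos2, aux_sin3, aux_cos3] at hQh hQm ⊢
        linear_combination (4*(Real.cos φ^2 - Real.sin φ^2)*Real.sin φ) * hQh
          - Real.sin φ * hQm
      · simp only [cfP, hA2]
        push_cast
        simp only [aux_sin2, aux_cos2, aux_sin3, aux_cos3, aux_sin5, aux_cos5] at hPh hPm ⊢
        linear_combination (4*(Real.cos φ^2 - Real.sin φ^2)*Real.sin φ) * hPh
          - Real.sin φ * hPm
          + (-(Real.sin φ*Real.cos φ)*(1+Real.cos φ^2+Real.sin φ^2)) * Real.sin_sq_add_cos_sq φ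
    by_cases c1 : k = 1
    · subst c1
      have : r = 1 := by simpa using hr
      subst this
      obtain ⟨hQ0, hP0⟩ := ih 0 (by omega) (by omega) 0 (by norm_num)
      rw [show m+2+0 = m+1+1 by omega] at hQ0 hP0
      rw [show (2*(0:ℝ)+3)*φ = 3*φ by ring] at hQ0 hP0
      rw [show (2*(0:ℝ)+1)*φ = φ by ring] at hP0
      have hd1 : A (m+1+2) = 1 := hA _ (by omega) (by omega)
      rw [show m+2+1 = m+1+2 by omega,
        show (2*(1:ℝ)+3)*φ = 5*φ by ring, show (2*(1:ℝ)+1)*φ = 3*φ by ring]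
      constructor
      · rw [show cfQ (2*Real.cos (2*φ)) A (m+1+2)
            = (A (m+1+2) : ℝ)*(2*Real.cos (2*φ))*cfQ (2*Real.cos (2*φ)) A (m+1+1)
              - cfQ (2*Real.cos (2*φ)) A (m+1) from rfl, hd1]
        push_cast
        simp only [aux_sin2, aux_cos2, aux_sin3, aux_cos3, aux_sin5, aux_cos5] at hQ0 hQh ⊢
        linear_combination (2*(Real.cos φ^2 - Real.sin φ^2)) * hQ0
          - Real.sin φ * hQh
          + (Real.sin φ*Real.cos φ*(1+Real.cos φ^2+Real.sin φ^2)) * Real.sin_sq_add_cos_sq φ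
      · rw [show cfP (2*Real.cos (2*φ)) A (m+1+2)
            = (A (m+1+2) : ℝ)*(2*Real.cos (2*φ))*cfP (2*Real.cos (2*φ)) A (m+1+1)
              - cfP (2*Real.cos (2*φ)) A (m+1) from rfl, hd1]
        push_cast
        simp only [aux_sin2, aux_cos2, aux_sin3, aux_cos3, aux_sin5, aux_cos5] at hP0 hPh ⊢
        linear_combination (2*(Real.cos φ^2 - Real.sin φ^2)) * hP0
          - Real.sin φ * hPh
          + (2*Real.sin φ*Real.cos φ*(Real.sin φ^2-Real.cos φ^2)*(1+Real.sin φ^2+Real.cos φ^2))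
            * Real.sin_sq_add_cos_sq φ
    obtain ⟨j, rfl⟩ : ∃ j, k = j + 2 := ⟨k - 2, by omega⟩
    have hr' : r = (j:ℝ)+2 := by rw [hr]; push_cast; ring
    subst hr'
    obtain ⟨h1Q, h1P⟩ := ih (j+1) (by omega) (by omega) ((j:ℝ)+1) (by push_cast; ring)
    obtain ⟨h0Q, h0P⟩ := ih j (by omega) (by omega) (j:ℝ) rfl
    rw [show m+2+(j+1) = m+2+j+1 by omega] at h1Q h1P
    rw [show (2*((j:ℝ)+1)+3)*φ = (2*(j:ℝ)+3)*φ + 2*φ by ring] at h1Q h1P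
    rw [show (2*((j:ℝ)+1)+1)*φ = (2*(j:ℝ)+3)*φ by ring] at h1P
    rw [show (2*(j:ℝ)+1)*φ = (2*(j:ℝ)+3)*φ - 2*φ by ring, Real.sin_sub] at h0P
    have hd : A (m+2+j+2) = 1 := hA _ (by omega) (by omega)
    rw [show m+2+(j+2) = m+2+j+2 by omega,
      show (2*((j:ℝ)+2)+3)*φ = ((2*(j:ℝ)+3)*φ + 2*φ) + 2*φ by ring,
      show (2*((j:ℝ)+2)+1)*φ = (2*(j:ℝ)+3)*φ + 2*φ by ring]
    constructor
    · simp only [cfQ, hd]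
      push_cast
      simp only [Real.sin_add, Real.cos_add] at h1Q ⊢
      linear_combination (2*Real.cos (2*φ))*h1Q - h0Q
        + (Real.sin ((2*(j:ℝ)+3)*φ) * Real.cos φ) * Real.sin_sq_add_cos_sq (2*φ)
    · simp only [cfP, hd]
      push_cast
      simp only [Real.sin_add, Real.cos_add] at h1P ⊢
      linear_combination (2*Real.cos (2*φ))*h1P - h0P
        + (-(2*Real.cos (2*φ) * Real.cos ((2*(j:ℝ)+3)*φ) * Real.sin φ))
          * Real.sin_sq_add_cos_sq (2*φ)

/-- The point `-λ_q/2` has the finite `λ_q`-CF `[0; (1)^{h_q}]` for even `q` and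
`[0; (1)^{h_q}, 2, (1)^{h_q}]` for odd `q`. -/
theorem stmt8 (q : ℕ) (hq : 3 ≤ q) :
    (Even q →
      cfDenList (lamq q) 0 (List.replicate (hQ q) 1) ≠ 0 ∧
        cfValList (lamq q) 0 (List.replicate (hQ q) 1) = -(lamq q) / 2) ∧
    (Odd q →
      cfDenList (lamq q) 0
        (List.replicate (hQ q) 1 ++ 2 :: List.replicate (hQ q) 1) ≠ 0 ∧
        cfValList (lamq q) 0
          (List.replicate (hQ q) 1 ++ 2 :: List.replicate (hQ q) 1) = -(lamq q) / 2) := by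

  have hq0 : (3:ℝ) ≤ (q:ℝ) := by exact_mod_cast hq
  have hq1 : (1:ℝ) < (q:ℝ) := by linarith
  constructor
  · -- even case
    intro hev
    obtain ⟨t, ht⟩ := hev
    obtain ⟨h, hq2⟩ : ∃ h, q = 2*h + 2 := ⟨(q-2)/2, by omega⟩
    have hhq : hQ q = h := by
      unfold hQ
      split_ifs with hc
      · omega
      · exact absurd ⟨t, ht⟩ hc
    simp only [cfDenList, cfValList, lamq, hhq, List.length_replicate]
    set θ := Real.pi / (q:ℝ) with hθ
    have hθpos : 0 < θ := by rw [hθ]; positivity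
    have hθlt : θ < Real.pi := by rw [hθ]; exact div_lt_self Real.pi_pos hq1
    have hsin : Real.sin θ ≠ 0 := ne_of_gt (Real.sin_pos_of_pos_of_lt_pi hθpos hθlt)
    have hqcast : (q:ℝ) = 2*(h:ℝ)+2 := by exact_mod_cast hq2
    have h2ne : (2*(h:ℝ)+2) ≠ 0 := by positivity
    have key : ((h:ℝ)+1)*θ = Real.pi/2 := by
      rw [hθ, hqcast]; field_simp
    have hA : ∀ j, 1 ≤ j → j ≤ h →
        (fun i => ((0:ℤ) :: List.replicate h (1:ℤ)).getD i 0) j = 1 := by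
      intro j h1 h2
      obtain ⟨i, rfl⟩ : ∃ i, j = i+1 := ⟨j-1, by omega⟩
      simp only [List.getD_cons_succ]
      exact aux_getD_rep h i (by omega)
    obtain ⟨hQf, hPf⟩ := aux_phase1 θ
      (fun i => ((0:ℤ) :: List.replicate h (1:ℤ)).getD i 0) h (by simp) hA
      h le_rfl (h:ℝ) rfl
    rw [key, Real.sin_pi_div_two] at hQf
    have key2 : (h:ℝ)*θ = Real.pi/2 - θ := by linear_combination key
    rw [key2, Real.sin_pi_div_two_sub] at hPf
    constructor
    · intro h0
      rw [h0, zero_mul] at hQf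
      exact zero_ne_one hQf
    · rw [(eq_div_iff hsin).mpr hQf, (eq_div_iff hsin).mpr hPf]
      field_simp
  · -- odd case
    intro hodd
    have hnev : ¬ Even q := (Nat.not_even_iff_odd).mpr hodd
    by_cases hq3 : q = 3
    · subst hq3
      have hhq : hQ 3 = 0 := by simp [hQ, hnev]
      rw [hhq]
      constructor
      · norm_num [cfDenList, cfQ, lamq, Real.cos_pi_div_three]
      · norm_num [cfValList, cfQ, cfP, lamq, Real.cos_pi_div_three]
    · obtain ⟨m, hq5⟩ : ∃ m, q = 2*m+5 := ⟨(q-5)/2, by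
        obtain ⟨t, ht⟩ := hodd; omega⟩
      have hhq : hQ q = m+1 := by
        unfold hQ
        split_ifs
        omega
      have hlen : (List.replicate (m+1) (1:ℤ) ++ 2 :: List.replicate (m+1) (1:ℤ)).length
          = 2*m+3 := by
        simp only [List.length_append, List.length_cons, List.length_replicate]; omega
      simp only [cfDenList, cfValList, lamq, hhq]
      rw [hlen]
      set φ := Real.pi / (q:ℝ) / 2 with hφ
      have hpi : Real.pi / (q:ℝ) = 2*φ := by rw [hφ]; ring
      rw [hpi]
      have hπq : 0 < Real.pi / (q:ℝ) := by positivity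
      have hπq2 : Real.pi / (q:ℝ) < Real.pi := div_lt_self Real.pi_pos hq1
      have hφpos : 0 < φ := by rw [hφ]; positivity
      have hφlt : φ < Real.pi/2 := by rw [hφ]; linarith
      have h2φlt : 2*φ < Real.pi := by rw [hφ]; linarith
      have hsφ : 0 < Real.sin φ := Real.sin_pos_of_pos_of_lt_pi hφpos (by linarith [Real.pi_pos])
      have hs2φ : 0 < Real.sin (2*φ) := Real.sin_pos_of_pos_of_lt_pi (by linarith) h2φlt
      have hcφ : 0 < Real.cos φ := Real.cos_pos_of_mem_Ioo ⟨by linarith, hφlt⟩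
      have hqc : (q:ℝ) = 2*(m:ℝ)+5 := by exact_mod_cast hq5
      have hqne : (q:ℝ) ≠ 0 := by positivity
      have key : (2*(m:ℝ)+5)*φ = Real.pi/2 := by
        rw [hφ, ← hqc]; field_simp
      have a1 : ((m:ℝ)+1+1)*(2*φ) = Real.pi/2 - φ := by linear_combination key
      have a2 : ((m:ℝ)+1)*(2*φ) = Real.pi/2 - 3*φ := by linear_combination key
      have a3 : (m:ℝ)*(2*φ) = Real.pi/2 - 5*φ := by linear_combination key
      have a4 : (2*((m:ℝ)+1)+1)*φ = Real.pi/2 - 2*φ := by linear_combination key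
      have a5 : (2*((m:ℝ)+1)+3)*φ = Real.pi/2 := by linear_combination key
      set A : ℕ → ℤ := fun i =>
        ((0:ℤ) :: (List.replicate (m+1) (1:ℤ) ++ 2 :: List.replicate (m+1) (1:ℤ))).getD i 0
        with hAdef
      have hA0 : A 0 = 0 := by simp [hAdef]
      have hA1 : ∀ j, 1 ≤ j → j ≤ m+1 → A j = 1 := by
        intro j h1 h2
        obtain ⟨i, rfl⟩ : ∃ i, j = i+1 := ⟨j-1, by omega⟩
        simp only [hAdef, List.getD_cons_succ]
        rw [List.getD_append _ _ _ _ (by simpa using (by omega : i < m+1))]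
        exact aux_getD_rep (m+1) i (by omega)
      have hA2 : A (m+2) = 2 := by
        simp only [hAdef, List.getD_cons_succ]
        rw [List.getD_append_right _ _ _ _ (by simp)]
        simp
      have hA3 : ∀ j, m+3 ≤ j → j ≤ 2*m+3 → A j = 1 := by
        intro j h1 h2
        obtain ⟨i, rfl⟩ : ∃ i, j = i+1 := ⟨j-1, by omega⟩
        simp only [hAdef, List.getD_cons_succ]
        rw [List.getD_append_right _ _ _ _ (by simpa using (by omega : m+1 ≤ i))]
        simp only [List.length_replicate]
        rw [show i - (m+1) = (i-m-2)+1 by omega, List.getD_cons_succ]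
        exact aux_getD_rep (m+1) _ (by omega)
      obtain ⟨hQh0, hPh0⟩ := aux_phase1 (2*φ) A (m+1) hA0 hA1 (m+1) le_rfl
        ((m:ℝ)+1) (by push_cast; ring)
      obtain ⟨hQm0, hPm0⟩ := aux_phase1 (2*φ) A (m+1) hA0 hA1 m (by omega)
        (m:ℝ) rfl
      rw [a1, Real.sin_pi_div_two_sub] at hQh0
      rw [a2, Real.sin_pi_div_two_sub] at hPh0
      rw [a2, Real.sin_pi_div_two_sub] at hQm0
      rw [a3, Real.sin_pi_div_two_sub] at hPm0
      obtain ⟨hQf, hPf⟩ := aux_phase2 φ A m hA2 hA3 hQh0 hQm0 hPh0 hPm0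
        (m+1) le_rfl ((m:ℝ)+1) (by push_cast; ring)
      rw [show m+2+(m+1) = 2*m+3 by omega] at hQf hPf
      rw [a5, Real.sin_pi_div_two, mul_one] at hQf
      rw [a5, a4, Real.cos_pi_div_two, Real.sin_pi_div_two_sub] at hPf
      have hPf' : cfP (2*Real.cos (2*φ)) A (2*m+3) * (Real.sin (2*φ) * Real.sin φ)
          = -(Real.cos φ * Real.cos (2*φ)) := by rw [hPf]; ring
      have hDne : Real.sin (2*φ) * Real.sin φ ≠ 0 := by positivity
      constructor
      · intro h0
        rw [h0, zero_mul] at hQf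
        exact (ne_of_gt hcφ) hQf.symm
      · rw [(eq_div_iff hDne).mpr hQf, (eq_div_iff hDne).mpr hPf']
        rw [div_div_div_cancel_right₀]
        · field_simp
        · exact hDne
end

section
/- Let q ≥ 4 be even. The infinite λ_q-continued fraction [1; (1)^{h_q−1}, 2, (1)^{h_q−1}, 2, …] (a_0 = 1 followed by the periodic repetition of the block consisting of h_q−1 entries 1 and one entry 2) is regular and converges to the value 1. -/
open Filter Topology

set_option maxHeartbeats 2000000 in
/-- For even `q ≥ 4` the infinite `λ_q`-CF `[1; ov((1)^{h_q-1}, 2)]` is regular and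
converges to `1`. -/
theorem stmt9 (q : ℕ) (hq : 4 ≤ q) (hqe : Even q) (A : ℕ → ℤ)
    (hA : A = fun n => if n = 0 then 1 else rho q (n - 1)) :
    (∀ i, A (i + 1) ≠ 0) ∧ RegularSeq q (fun i => A (i + 1)) ∧
      CFConvergesTo (lamq q) A 1 := by
  have hk := hqe
  obtain ⟨k, hk⟩ := hk
  set h : ℕ := (q - 2) / 2 with hhdef
  have hh1 : 1 ≤ h := by omega
  have hq2h : q = 2 * h + 2 := by omega
  have hQq : hQ q = h := by unfold hQ; rw [if_pos hqe]
  have hB : rhoBlock q = List.replicate (h - 1) 1 ++ [2] := by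
    unfold rhoBlock; rw [if_neg (by omega : q ≠ 3), if_pos hqe, hQq]
  have hBlen : (rhoBlock q).length = h := by rw [hB]; simp; omega
  have hrho : ∀ i, rho q i = if i % h = h - 1 then 2 else 1 := by
    intro i
    have hmod : i % h < h := Nat.mod_lt _ (by omega)
    rw [rho, hBlen, hB]
    by_cases hc : i % h = h - 1
    · rw [if_pos hc, hc, List.getD_append_right _ _ _ _ (by simp)]
      simp
    · rw [if_neg hc, List.getD_append _ _ _ _ (by simp; omega)]
      rw [List.getD_eq_getElem _ _ (by simp; omega)]
      simp
  have hA0 : A 0 = 1 := by rw [hA]; norm_num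
  have hAs : ∀ n, A (n + 1) = rho q n := by intro n; rw [hA]; simp
  have hA1 : ∀ n, n % h ≠ h - 1 → A (n + 1) = 1 := by
    intro n hn; rw [hAs, hrho, if_neg hn]
  have hA2 : ∀ n, n % h = h - 1 → A (n + 1) = 2 := by
    intro n hn; rw [hAs, hrho, if_pos hn]
  have hAper : ∀ n, A (n + 1 + h) = A (n + 1) := by
    intro n
    rw [show n + 1 + h = (n + h) + 1 by ring, hAs, hAs, hrho, hrho, Nat.add_mod_right]
  -- the special index with digit 2 in each window of length h
  have hwin : ∀ l : ℕ, ∃ j < h, A (l + j + 1) = 2 := by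
    intro l
    refine ⟨h - 1 - l % h, by omega, hA2 _ ?_⟩
    have hdm := Nat.div_add_mod l h
    have hml : l % h < h := Nat.mod_lt _ (by omega)
    have e : l + (h - 1 - l % h) = h * (l / h) + (h - 1) := by omega
    rw [e, Nat.mul_add_mod, Nat.mod_eq_of_lt (by omega)]
  -- nonzero digits
  have hAne : ∀ i, A (i + 1) ≠ 0 := by
    intro i; rw [hAs, hrho]; split <;> norm_num
  refine ⟨hAne, ?_, ?_⟩
  · -- regularity
    intro l len hF
    obtain ⟨ε, hε, hcase⟩ := hF
    obtain ⟨j0, hj0, hval⟩ := hwin l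
    rw [if_pos hqe] at hcase
    have hεne : (2 : ℤ) ≠ ε := by rcases hε with rfl | rfl <;> norm_num
    simp only [hQq] at hcase
    rcases hcase with hcase | ⟨m, hm, hcase⟩
    · have hlen : len = h + 1 := by simpa using congrArg List.length hcase
      have h1 := congrArg (fun L : List ℤ => L.getD j0 0) hcase
      rw [List.getD_eq_getElem _ _ (by simp [hlen]; omega), List.getElem_ofFn] at h1
      simp only at h1
      rw [List.getD_eq_getElem _ _ (by simp; omega), List.getElem_replicate] at h1
      rw [hval] at h1
      exact hεne h1
    · have hlen : len = h + 1 := by simpa using congrArg List.length hcase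
      have h1 := congrArg (fun L : List ℤ => L.getD j0 0) hcase
      rw [List.getD_eq_getElem _ _ (by simp [hlen]; omega), List.getElem_ofFn] at h1
      simp only at h1
      rw [List.getD_append _ _ _ _ (by simp; omega),
        List.getD_eq_getElem _ _ (by simp; omega), List.getElem_replicate] at h1
      rw [hval] at h1
      exact hεne h1
  · -- convergence
    obtain ⟨θ, hθdef⟩ : ∃ x : ℝ, x = Real.pi / q := ⟨_, rfl⟩
    have hqR : (0 : ℝ) < q := by positivity
    have hθpos : 0 < θ := by rw [hθdef]; positivity
    have hpi := Real.pi_pos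
    have hθle : θ ≤ Real.pi / 4 := by
      have h4 : (4 : ℝ) ≤ q := by exact_mod_cast hq
      rw [hθdef, div_le_div_iff₀ hqR (by norm_num)]
      nlinarith
    have hθlt2 : θ < Real.pi / 2 := lt_of_le_of_lt hθle (by linarith)
    have hsin : 0 < Real.sin θ := Real.sin_pos_of_pos_of_lt_pi hθpos (by linarith)
    have hcos : 0 < Real.cos θ := Real.cos_pos_of_mem_Ioo ⟨by linarith, hθlt2⟩
    have hpyth := Real.sin_sq_add_cos_sq θ
    have hcos1 : Real.cos θ < 1 := by nlinarith
    have hlam : lamq q = 2 * Real.cos θ := by rw [lamq, ← hθdef]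
    have hhθ : ((h : ℝ) + 1) * θ = Real.pi / 2 := by
      rw [hθdef]
      have hq0' : (q : ℝ) ≠ 0 := by positivity
      have hqc : (q : ℝ) = 2 * h + 2 := by exact_mod_cast hq2h
      field_simp
      rw [hqc]; ring
    obtain ⟨c, hcdef⟩ : ∃ x : ℝ, x = (1 - Real.cos θ) / Real.sin θ := ⟨_, rfl⟩
    have hc0 : 0 < c := by rw [hcdef]; exact div_pos (by linarith) hsin
    have hc1 : c < 1 := by rw [hcdef, div_lt_one hsin]; nlinarith
    obtain ⟨P, hP⟩ : ∃ x : ℕ → ℝ, x = cfP (lamq q) A := ⟨_, rfl⟩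
    obtain ⟨Q, hQdef⟩ : ∃ x : ℕ → ℝ, x = cfQ (lamq q) A := ⟨_, rfl⟩
    obtain ⟨d, hd_eq⟩ : ∃ x : ℕ → ℝ, x = fun n => P n - Q n := ⟨_, rfl⟩
    have hd0 : d 0 = 2 * Real.cos θ - 1 := by
      simp only [hd_eq, hP, hQdef, cfP, cfQ, hA0, hlam]; push_cast; ring
    have hd1 : d 1 = (A 1 : ℝ) * (2 * Real.cos θ) * (2 * Real.cos θ - 1) - 1 := by
      simp only [hd_eq, hP, hQdef, cfP, cfQ, hA0, hlam]; push_cast; ring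
    have hdrec : ∀ n, d (n + 2) = (A (n + 2) : ℝ) * (2 * Real.cos θ) * d (n + 1) - d n := by
      intro n
      simp only [hd_eq, hP, hQdef, cfP, cfQ, hlam]; ring
    have key : ∀ x : ℝ, Real.sin (x + θ) + Real.sin (x - θ) = 2 * Real.cos θ * Real.sin x := by
      intro x; rw [Real.sin_add, Real.sin_sub]; ring
    have hdform : ∀ n, n < h →
        d n * Real.sin θ = Real.sin (((n : ℝ) + 2) * θ) - Real.sin (((n : ℝ) + 1) * θ) := by
      intro n
      induction n using Nat.strong_induction_on with
      | _ n ih =>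
        match n, ih with
        | 0, _ =>
          intro _
          have s2 : Real.sin (2 * θ) = 2 * Real.sin θ * Real.cos θ := Real.sin_two_mul θ
          rw [hd0]; push_cast; norm_num
          linear_combination -s2
        | 1, ih =>
          intro hn
          have hA1' : A 1 = 1 := hA1 0 (by rw [Nat.zero_mod]; omega)
          have s2 : Real.sin (2 * θ) = 2 * Real.sin θ * Real.cos θ := Real.sin_two_mul θ
          have k1 : Real.sin (3 * θ) + Real.sin θ = 2 * Real.cos θ * Real.sin (2 * θ) := by
            have := key (2 * θ)
            rw [show 2 * θ + θ = 3 * θ by ring, show 2 * θ - θ = θ by ring] at this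
            exact this
          rw [hd1, hA1']; push_cast; norm_num
          linear_combination (-1 : ℝ) * k1 - (2 * Real.cos θ - 1) * s2
        | (m + 2), ih =>
          intro hn
          have hA1' : A (m + 2) = 1 := hA1 (m + 1) (by
            rw [Nat.mod_eq_of_lt (by omega)]; omega)
          have IH1 : d (m + 1) * Real.sin θ =
              Real.sin (((m : ℝ) + 3) * θ) - Real.sin (((m : ℝ) + 2) * θ) := by
            have := ih (m + 1) (by omega) (by omega)
            push_cast at this ⊢
            convert this using 3 <;> ring
          have IH0 : d m * Real.sin θ =
              Real.sin (((m : ℝ) + 2) * θ) - Real.sin (((m : ℝ) + 1) * θ) := by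
            have := ih m (by omega) (by omega)
            push_cast at this ⊢
            exact this
          have kA : Real.sin (((m : ℝ) + 4) * θ) + Real.sin (((m : ℝ) + 2) * θ) =
              2 * Real.cos θ * Real.sin (((m : ℝ) + 3) * θ) := by
            have := key (((m : ℝ) + 3) * θ)
            rw [show ((m : ℝ) + 3) * θ + θ = ((m : ℝ) + 4) * θ by ring,
              show ((m : ℝ) + 3) * θ - θ = ((m : ℝ) + 2) * θ by ring] at this
            exact this
          have kB : Real.sin (((m : ℝ) + 3) * θ) + Real.sin (((m : ℝ) + 1) * θ) =
              2 * Real.cos θ * Real.sin (((m : ℝ) + 2) * θ) := by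
            have := key (((m : ℝ) + 2) * θ)
            rw [show ((m : ℝ) + 2) * θ + θ = ((m : ℝ) + 3) * θ by ring,
              show ((m : ℝ) + 2) * θ - θ = ((m : ℝ) + 1) * θ by ring] at this
            exact this
          rw [hdrec m, hA1']
          push_cast
          have e1 : ((m : ℝ) + 2 + 2) = (m : ℝ) + 4 := by ring
          have e2 : ((m : ℝ) + 2 + 1) = (m : ℝ) + 3 := by ring
          rw [e1, e2]
          linear_combination (2 * Real.cos θ) * IH1 - IH0 - kA + kB
    have hcastm1 : ((h - 1 : ℕ) : ℝ) = (h : ℝ) - 1 := by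
      rw [Nat.cast_sub hh1]; norm_num
    have hdc : d (h - 1) = c := by
      have hf := hdform (h - 1) (by omega)
      rw [hcastm1] at hf
      rw [show ((h : ℝ) - 1 + 2) * θ = ((h : ℝ) + 1) * θ by ring, hhθ,
        Real.sin_pi_div_two, show ((h : ℝ) - 1 + 1) * θ = Real.pi / 2 - θ by
          linear_combination hhθ, Real.sin_pi_div_two_sub] at hf
      rw [hcdef, eq_div_iff hsin.ne']
      linarith [hf]
    have hcs : c * Real.sin θ = 1 - Real.cos θ := by
      rw [hcdef]; field_simp
    have hdh : d h = c * d 0 := by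
      by_cases h1 : h = 1
      · have hhθ' : θ = Real.pi / 2 - θ := by
          rw [h1] at hhθ; push_cast at hhθ; linarith
        have hsc : Real.sin θ = Real.cos θ := by
          nth_rewrite 1 [hhθ']
          exact Real.sin_pi_div_two_sub θ
        have hcos2 : Real.cos θ ^ 2 = 1 / 2 := by
          linear_combination (1 / 2) * hpyth - ((Real.sin θ + Real.cos θ) / 2) * hsc
        have hA1' : A 1 = 2 := hA2 0 (by rw [Nat.zero_mod]; omega)
        rw [h1, hd1, hA1', hd0]
        push_cast
        refine mul_right_cancel₀ hsin.ne' ?_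
        linear_combination (-(2 * Real.cos θ - 1)) * hcs +
          (8 * Real.cos θ ^ 2 - 4 * Real.cos θ - 1) * hsc + (8 * Real.cos θ - 2) * hcos2
      · have hh2 : 2 ≤ h := by omega
        have hAh : A h = 2 := by
          rw [show h = (h - 1) + 1 by omega]
          exact hA2 (h - 1) (Nat.mod_eq_of_lt (by omega))
        have hrec : d h = (A h : ℝ) * (2 * Real.cos θ) * d (h - 1) - d (h - 2) := by
          have := hdrec (h - 2)
          rw [show h - 2 + 2 = h by omega, show h - 2 + 1 = h - 1 by omega] at this
          exact this
        have hcastm2 : ((h - 2 : ℕ) : ℝ) = (h : ℝ) - 2 := by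
          rw [Nat.cast_sub hh2]; norm_num
        have hf := hdform (h - 2) (by omega)
        rw [hcastm2] at hf
        rw [show ((h : ℝ) - 2 + 2) * θ = Real.pi / 2 - θ by linear_combination hhθ,
          show ((h : ℝ) - 2 + 1) * θ = Real.pi / 2 - 2 * θ by linear_combination hhθ,
          Real.sin_pi_div_two_sub, Real.sin_pi_div_two_sub, Real.cos_two_mul] at hf
        rw [hrec, hAh, hdc, hd0]
        push_cast
        refine mul_right_cancel₀ hsin.ne' ?_
        linear_combination (2 * Real.cos θ + 1) * hcs - hf
    have hprop : ∀ n, d (n + h) = c * d n := by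
      intro n
      induction n using Nat.strong_induction_on with
      | _ n ih =>
        match n, ih with
        | 0, _ => simpa using hdh
        | 1, _ =>
          have hrec : d (1 + h) = (A (1 + h) : ℝ) * (2 * Real.cos θ) * d h - d (h - 1) := by
            have := hdrec (h - 1)
            rw [show h - 1 + 2 = 1 + h by omega, show h - 1 + 1 = h by omega] at this
            exact this
          have hper : A (1 + h) = A 1 := by simpa using hAper 0
          rw [hrec, hper, hdh, hdc, hd1, hd0]
          ring
        | (m + 2), ih =>
          have ih0 := ih m (by omega)
          have ih1 := ih (m + 1) (by omega)
          have hrec1 : d (m + 2 + h) = (A (m + 2 + h) : ℝ) * (2 * Real.cos θ) * d (m + 1 + h) - d (m + h) := by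
            have := hdrec (m + h)
            rw [show m + h + 2 = m + 2 + h by omega, show m + h + 1 = m + 1 + h by omega] at this
            exact this
          have hper : A (m + 2 + h) = A (m + 2) := by
            have := hAper (m + 1)
            rw [show m + 1 + 1 + h = m + 2 + h by omega, show m + 1 + 1 = m + 2 by omega] at this
            exact this
          rw [hrec1, hper, ih0, ih1, hdrec m]
          ring
    have hd_pos : ∀ n, 0 < d n := by
      intro n
      induction n using Nat.strong_induction_on with
      | _ n ih =>
        by_cases hn : n < h
        · have hf := hdform n hn
          have hcast : (n : ℝ) + 1 ≤ (h : ℝ) := by exact_mod_cast hn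
          have hnθ : 0 ≤ (n : ℝ) * θ := mul_nonneg (Nat.cast_nonneg n) hθpos.le
          have hle1 : ((n : ℝ) + 2) * θ ≤ Real.pi / 2 := by
            rw [← hhθ]
            exact mul_le_mul_of_nonneg_right (by linarith) hθpos.le
          have hmono : Real.sin (((n : ℝ) + 1) * θ) < Real.sin (((n : ℝ) + 2) * θ) := by
            refine Real.strictMonoOn_sin (Set.mem_Icc.mpr ⟨by linarith, by linarith⟩)
              (Set.mem_Icc.mpr ⟨by linarith, by linarith⟩) (by linarith)
          have h2 : 0 < d n * Real.sin θ := by rw [hf]; linarith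
          rcases mul_pos_iff.mp h2 with ⟨hh', _⟩ | ⟨_, hh'⟩
          · exact hh'
          · linarith
        · push_neg at hn
          have := hprop (n - h)
          rw [show n - h + h = n by omega] at this
          rw [this]
          exact mul_pos hc0 (ih (n - h) (by omega))
    have hCpos : 0 < 1 / Real.sin θ := by positivity
    have hd_le : ∀ n, d n ≤ (1 / Real.sin θ) * c ^ (n / h) := by
      intro n
      induction n using Nat.strong_induction_on with
      | _ n ih =>
        by_cases hn : n < h
        · rw [Nat.div_eq_of_lt hn, pow_zero, mul_one]
          have hf := hdform n hn
          have hub : Real.sin (((n : ℝ) + 2) * θ) ≤ 1 := Real.sin_le_one _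
          have hcast : (n : ℝ) + 1 ≤ (h : ℝ) := by exact_mod_cast hn
          have hle1 : ((n : ℝ) + 2) * θ ≤ Real.pi / 2 := by
            rw [← hhθ]
            exact mul_le_mul_of_nonneg_right (by linarith) hθpos.le
          have hlb : 0 ≤ Real.sin (((n : ℝ) + 1) * θ) := by
            apply Real.sin_nonneg_of_nonneg_of_le_pi
            · positivity
            · linarith
          rw [le_div_iff₀ hsin]
          linarith
        · push_neg at hn
          have hstep := hprop (n - h)
          rw [show n - h + h = n by omega] at hstep
          have ihh := ih (n - h) (by omega)
          have hdiv : n / h = (n - h) / h + 1 := Nat.div_eq_sub_div (by omega) hn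
          rw [hstep, hdiv, pow_succ]
          calc c * d (n - h) ≤ c * ((1 / Real.sin θ) * c ^ ((n - h) / h)) := by
                exact mul_le_mul_of_nonneg_left ihh hc0.le
            _ = 1 / Real.sin θ * (c ^ ((n - h) / h) * c) := by ring
    have htendd : Tendsto d atTop (nhds 0) := by
      have h1 : Tendsto (fun n : ℕ => n / h) atTop atTop :=
        tendsto_atTop_atTop.2 fun b => ⟨b * h, fun n hn => (Nat.le_div_iff_mul_le (by omega)).2 hn⟩
      have h2 : Tendsto (fun n : ℕ => (1 / Real.sin θ) * c ^ (n / h)) atTop (nhds 0) := by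
        have := ((tendsto_pow_atTop_nhds_zero_of_lt_one hc0.le hc1).comp h1).const_mul
          (1 / Real.sin θ)
        simpa using this
      exact squeeze_zero (fun n => (hd_pos n).le) hd_le h2
    have hdet : ∀ n, P (n + 1) * Q n - P n * Q (n + 1) = -1 := by
      intro n
      induction n with
      | zero => simp only [hP, hQdef, cfP, cfQ]; ring
      | succ n ih =>
        have e1 : P (n + 1 + 1) = (A (n + 2) : ℝ) * lamq q * P (n + 1) - P n := by
          simp only [hP, cfP]
        have e2 : Q (n + 1 + 1) = (A (n + 2) : ℝ) * lamq q * Q (n + 1) - Q n := by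
          simp only [hQdef, cfQ]
        rw [e1, e2]
        linear_combination ih
    have hdet2 : ∀ n, d n * Q (n + 1) = d (n + 1) * Q n + 1 := by
      intro n
      simp only [hd_eq]
      linear_combination (-1 : ℝ) * hdet n
    have hQpos : ∀ n, 0 < Q n := by
      intro n
      induction n with
      | zero => simp only [hQdef, cfQ]; norm_num
      | succ n ih =>
        have := hdet2 n
        nlinarith [hd_pos n, hd_pos (n + 1), ih]
    have hQlb : ∀ n, 1 ≤ d n * Q (n + 1) := by
      intro n
      rw [hdet2 n]
      nlinarith [hd_pos (n + 1), hQpos n]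
    refine ⟨fun n => by rw [← hQdef]; exact (hQpos n).ne', ?_⟩
    have hPQ : ∀ n, P n / Q n = 1 + d n / Q n := by
      intro n
      have hQn := (hQpos n).ne'
      simp only [hd_eq]
      field_simp
      ring
    have hd_leC : ∀ n, d n ≤ 1 / Real.sin θ := by
      intro n
      calc d n ≤ (1 / Real.sin θ) * c ^ (n / h) := hd_le n
        _ ≤ (1 / Real.sin θ) * 1 := by
            apply mul_le_mul_of_nonneg_left _ hCpos.le
            exact pow_le_one₀ hc0.le hc1.le
        _ = 1 / Real.sin θ := by ring
    have hsq : Tendsto (fun n => d n / Q n) atTop (nhds 0) := by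
      apply squeeze_zero' (g := fun n => (1 / Real.sin θ) * d (n - 1))
      · exact Filter.Eventually.of_forall fun n => div_nonneg (hd_pos n).le (hQpos n).le
      · rw [Filter.eventually_atTop]
        refine ⟨1, fun n hn => ?_⟩
        have hlb := hQlb (n - 1)
        rw [show n - 1 + 1 = n by omega] at hlb
        rw [div_le_iff₀ (hQpos n)]
        have h1 : d n ≤ 1 / Real.sin θ := hd_leC n
        nlinarith [hd_pos n, hd_pos (n - 1), hQpos n, hCpos]
      · have := (htendd.comp (tendsto_sub_atTop_nat 1)).const_mul (1 / Real.sin θ)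
        simpa using this
    have : Tendsto (fun n => 1 + d n / Q n) atTop (nhds 1) := by
      have := hsq.const_add 1
      simpa using this
    simp only [← hP, ← hQdef]
    exact this.congr fun n => (hPQ n).symm
end

section
/- Let q ≥ 3 and let x ∈ I_q satisfy f_q^n(x) ∉ {−λ_q/2, λ_q/2} for all n ≥ 0. If (a_i) and (b_i) are (finite or infinite) q-regular sequences of nonzero integers such that the λ_q-continued fractions [0; a_1, a_2, …] and [0; b_1, b_2, …] both converge to x (for a finite sequence this means the value p_L/q_L of the finite continued fraction equals x), then the two sequences have the same length and identical entries. -/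
open Filter Topology

/-- A finite or infinite digit sequence. -/
def SeqRegular (q : ℕ) : List ℤ ⊕ (ℕ → ℤ) → Prop
  | Sum.inl L => (∀ x ∈ L, x ≠ 0) ∧ RegularList q L
  | Sum.inr a => (∀ i, a i ≠ 0) ∧ RegularSeq q a

/-- The continued fraction `[0; a₁, a₂, …]` given by the (finite or infinite) digit
sequence converges to `x`. -/
def SeqConvTo (lam : ℝ) : List ℤ ⊕ (ℕ → ℤ) → ℝ → Prop
  | Sum.inl L, x => cfDenList lam 0 L ≠ 0 ∧ cfValList lam 0 L = x
  | Sum.inr a, x => CFConvergesTo lam (fun n => if n = 0 then 0 else a (n - 1)) x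

namespace CF11

theorem cfP_zero (lam : ℝ) (A : ℕ → ℤ) : cfP lam A 0 = (A 0 : ℝ) * lam := rfl
theorem cfP_one (lam : ℝ) (A : ℕ → ℤ) :
    cfP lam A 1 = (A 1 : ℝ) * lam * ((A 0 : ℝ) * lam) - 1 := rfl
theorem cfP_succ2 (lam : ℝ) (A : ℕ → ℤ) (n : ℕ) :
    cfP lam A (n+2) = (A (n+2) : ℝ) * lam * cfP lam A (n+1) - cfP lam A n := rfl
theorem cfQ_zero (lam : ℝ) (A : ℕ → ℤ) : cfQ lam A 0 = 1 := rfl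
theorem cfQ_one (lam : ℝ) (A : ℕ → ℤ) : cfQ lam A 1 = (A 1 : ℝ) * lam := rfl
theorem cfQ_succ2 (lam : ℝ) (A : ℕ → ℤ) (n : ℕ) :
    cfQ lam A (n+2) = (A (n+2) : ℝ) * lam * cfQ lam A (n+1) - cfQ lam A n := rfl

/-- two-step induction helper -/
theorem nat_two_step {P : ℕ → Prop} (h0 : P 0) (h1 : P 1)
    (hstep : ∀ n, P n → P (n+1) → P (n+2)) : ∀ n, P n := by
  have H : ∀ n, P n ∧ P (n+1) := by
    intro n
    induction n with
    | zero => exact ⟨h0, h1⟩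
    | succ k ih => exact ⟨ih.2, hstep k ih.1 ih.2⟩
  exact fun n => (H n).1

theorem cfPQ_ext (lam : ℝ) (A A' : ℕ → ℤ) :
    ∀ n, (∀ i ≤ n, A i = A' i) → cfP lam A n = cfP lam A' n ∧ cfQ lam A n = cfQ lam A' n := by
  refine nat_two_step ?_ ?_ ?_
  · intro h
    rw [cfP_zero, cfP_zero, cfQ_zero, cfQ_zero, h 0 (le_refl 0)]
    exact ⟨rfl, rfl⟩
  · intro h
    rw [cfP_one, cfP_one, cfQ_one, cfQ_one, h 0 (by norm_num), h 1 le_rfl]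
    exact ⟨rfl, rfl⟩
  · intro n ih1 ih2 h
    have e1 := ih1 (fun i hi => h i (by omega))
    have e2 := ih2 (fun i hi => h i (by omega))
    rw [cfP_succ2, cfP_succ2, cfQ_succ2, cfQ_succ2, e1.1, e1.2, e2.1, e2.2, h (n+2) le_rfl]
    exact ⟨rfl, rfl⟩

theorem cons_rel (lam : ℝ) (A₁ A₂ : ℕ → ℤ) (h10 : A₁ 0 = 0) (h20 : A₂ 0 = 0)
    (hsh : ∀ k, A₁ (k + 2) = A₂ (k + 1)) :
    ∀ n, cfP lam A₁ (n+1) = - cfQ lam A₂ n ∧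
      cfQ lam A₁ (n+1) = (A₁ 1 : ℝ) * lam * cfQ lam A₂ n + cfP lam A₂ n := by
  refine nat_two_step ?_ ?_ ?_
  · constructor
    · rw [cfP_one, cfQ_zero, h10]; ring
    · rw [cfQ_one, cfQ_zero, cfP_zero, h20]; push_cast; ring
  · have h2 : A₁ 2 = A₂ 1 := hsh 0
    constructor
    · show cfP lam A₁ (0+2) = - cfQ lam A₂ 1
      rw [cfP_succ2, cfP_one, cfP_zero, cfQ_one, h2, h10]; push_cast; ring
    · show cfQ lam A₁ (0+2) = _
      rw [cfQ_succ2, cfQ_one, cfQ_zero, cfQ_one, cfP_one, h2, h20]; push_cast; ring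
  · intro n ih1 ih2
    have h3 : A₁ (n+1+2) = A₂ (n+2) := hsh (n+1)
    have i21 : cfP lam A₁ (n+1+1) = - cfQ lam A₂ (n+1) := ih2.1
    have i22 : cfQ lam A₁ (n+1+1) = (A₁ 1 : ℝ) * lam * cfQ lam A₂ (n+1) + cfP lam A₂ (n+1) := ih2.2
    constructor
    · show cfP lam A₁ ((n+1)+2) = - cfQ lam A₂ (n+2)
      rw [cfP_succ2 lam A₁ (n+1), cfQ_succ2 lam A₂ n, h3, i21, ih1.1]; ring
    · show cfQ lam A₁ ((n+1)+2) = _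
      rw [cfQ_succ2 lam A₁ (n+1), cfQ_succ2 lam A₂ n, cfP_succ2 lam A₂ n, h3, i22, ih1.2]; ring

theorem neg_rel (lam : ℝ) (A : ℕ → ℤ) :
    ∀ n, cfP lam (fun i => - A i) n = (-1)^(n+1) * cfP lam A n ∧
      cfQ lam (fun i => - A i) n = (-1)^n * cfQ lam A n := by
  refine nat_two_step ?_ ?_ ?_
  · constructor
    · rw [cfP_zero, cfP_zero]; push_cast; ring
    · rw [cfQ_zero, cfQ_zero]; ring
  · constructor
    · rw [cfP_one, cfP_one]; push_cast; ring
    · rw [cfQ_one, cfQ_one]; push_cast; ring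
  · intro n ih1 ih2
    have i21 : cfP lam (fun i => - A i) (n+1) = (-1)^(n+1+1) * cfP lam A (n+1) := ih2.1
    have i22 : cfQ lam (fun i => - A i) (n+1) = (-1)^(n+1) * cfQ lam A (n+1) := ih2.2
    constructor
    · rw [cfP_succ2, cfP_succ2, i21, ih1.1]; push_cast; ring
    · rw [cfQ_succ2, cfQ_succ2, i22, ih1.2]; push_cast; ring

end CF11
namespace CF11

/-- numerator of the finite CF `[0; L]`. -/
noncomputable def Pl (lam : ℝ) (L : List ℤ) : ℝ :=
  cfP lam (fun i => ((0 : ℤ) :: L).getD i 0) L.length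

noncomputable def Kl (lam : ℝ) (L : List ℤ) : ℝ := cfDenList lam 0 L

noncomputable def Vl (lam : ℝ) (L : List ℤ) : ℝ := cfValList lam 0 L

theorem Vl_eq (lam : ℝ) (L : List ℤ) : Vl lam L = Pl lam L / Kl lam L := rfl

theorem Vl_nil (lam : ℝ) : Vl lam [] = 0 := by
  simp [Vl, cfValList, cfP_zero]

theorem Kl_nil (lam : ℝ) : Kl lam [] = 1 := rfl

theorem Pl_cons (lam : ℝ) (a : ℤ) (L : List ℤ) :
    Pl lam (a :: L) = - Kl lam L ∧
    Kl lam (a :: L) = (a : ℝ) * lam * Kl lam L + Pl lam L := by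
  have h := cons_rel lam (fun i => ((0:ℤ) :: a :: L).getD i 0)
      (fun i => ((0:ℤ) :: L).getD i 0) rfl rfl (fun k => rfl) L.length
  have ha : ((0:ℤ) :: a :: L).getD 1 0 = a := rfl
  constructor
  · exact h.1
  · have := h.2
    rw [ha] at this
    exact this

theorem Vl_cons (lam : ℝ) (a : ℤ) (L : List ℤ) (hK : Kl lam L ≠ 0)
    (hd : (a : ℝ) * lam + Vl lam L ≠ 0) :
    Vl lam (a :: L) = -1 / ((a : ℝ) * lam + Vl lam L) ∧
    Kl lam (a :: L) = ((a : ℝ) * lam + Vl lam L) * Kl lam L := by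
  have hP : Pl lam L = Vl lam L * Kl lam L := by
    rw [Vl_eq]; field_simp
  have h1 := (Pl_cons lam a L).1
  have h2 := (Pl_cons lam a L).2
  have hKc : Kl lam (a :: L) = ((a : ℝ) * lam + Vl lam L) * Kl lam L := by
    rw [h2, hP]; ring
  refine ⟨?_, hKc⟩
  rw [Vl_eq, h1, hKc]
  field_simp

theorem getD_neg (L : List ℤ) (i : ℕ) :
    (L.map (fun z => -z)).getD i 0 = - (L.getD i 0) := by
  rcases h : L[i]? with _ | z
  · simp [List.getD, List.getElem?_map, h]
  · simp [List.getD, List.getElem?_map, h]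

theorem getD_cons_neg (L : List ℤ) (i : ℕ) :
    (((0:ℤ) :: L.map (fun z => -z))).getD i 0 = - (((0:ℤ) :: L).getD i 0) := by
  cases i with
  | zero => rfl
  | succ k => exact getD_neg L k

theorem Kl_neg (lam : ℝ) (L : List ℤ) :
    Kl lam (L.map (fun z => -z)) = (-1)^L.length * Kl lam L := by
  have e := cfPQ_ext lam (fun i => (((0:ℤ) :: L.map (fun z => -z))).getD i 0)
      (fun i => - (((0:ℤ) :: L).getD i 0)) L.length (fun i _ => getD_cons_neg L i)
  have n := neg_rel lam (fun i => (((0:ℤ) :: L).getD i 0)) L.length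
  show cfQ lam _ ((L.map (fun z => -z)).length) = _
  rw [List.length_map]
  rw [e.2, n.2]
  rfl

theorem Vl_neg (lam : ℝ) (L : List ℤ) :
    Vl lam (L.map (fun z => -z)) = - Vl lam L := by
  have e := cfPQ_ext lam (fun i => (((0:ℤ) :: L.map (fun z => -z))).getD i 0)
      (fun i => - (((0:ℤ) :: L).getD i 0)) L.length (fun i _ => getD_cons_neg L i)
  have n := neg_rel lam (fun i => (((0:ℤ) :: L).getD i 0)) L.length
  have hV : Vl lam (L.map (fun z => -z)) =
      cfP lam (fun i => (((0:ℤ) :: L.map (fun z => -z))).getD i 0) L.length /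
      cfQ lam (fun i => (((0:ℤ) :: L.map (fun z => -z))).getD i 0) L.length := by
    show cfP lam _ ((L.map (fun z => -z)).length) / cfQ lam _ _ = _
    rw [List.length_map]
  rw [hV, e.1, e.2, n.1, n.2, Vl_eq]
  have hP : cfP lam (fun i => (((0:ℤ) :: L)).getD i 0) L.length = Pl lam L := rfl
  have hQ : cfQ lam (fun i => (((0:ℤ) :: L)).getD i 0) L.length = Kl lam L := rfl
  rw [hP, hQ]
  rcases eq_or_ne (Kl lam L) 0 with h | h
  · rw [h, mul_zero, div_zero, div_zero, neg_zero]
  · have hpow : ((-1:ℝ))^L.length ≠ 0 := pow_ne_zero _ (by norm_num)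
    rw [pow_succ, mul_assoc, mul_div_mul_left _ _ hpow, neg_one_mul, neg_div]
end CF11
namespace CF11

/-- the angle π/q -/
noncomputable def thq (q : ℕ) : ℝ := Real.pi / q

/-- `k * θ` -/
noncomputable def ang (q : ℕ) (k : ℕ) : ℝ := (k : ℝ) * thq q

theorem lamq_eq (q : ℕ) : lamq q = 2 * Real.cos (thq q) := rfl

theorem ang_succ (q : ℕ) (k : ℕ) : ang q (k+1) = ang q k + thq q := by
  rw [ang, ang]; push_cast; ring

theorem cos_chain (q : ℕ) (k : ℕ) :
    lamq q * Real.cos (ang q (k+1)) - Real.cos (ang q (k+2)) = Real.cos (ang q k) := by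
  have e1 : ang q (k+2) = ang q (k+1) + thq q := ang_succ q (k+1)
  have e2 : ang q k = ang q (k+1) - thq q := by rw [ang_succ q k]; ring
  rw [lamq_eq, e1, e2, Real.cos_add, Real.cos_sub]
  ring

theorem sin_chain (q : ℕ) (k : ℕ) :
    lamq q * Real.sin (ang q (k+1)) - Real.sin (ang q (k+2)) = Real.sin (ang q k) := by
  have e1 : ang q (k+2) = ang q (k+1) + thq q := ang_succ q (k+1)
  have e2 : ang q k = ang q (k+1) - thq q := by rw [ang_succ q k]; ring
  rw [lamq_eq, e1, e2, Real.sin_add, Real.sin_sub]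
  ring

section basic
variable {q : ℕ} (hq : 3 ≤ q)

include hq

theorem qR_pos : (0:ℝ) < q := by exact_mod_cast lt_of_lt_of_le (by norm_num : (0:ℕ) < 3) hq

theorem thq_pos : 0 < thq q := div_pos Real.pi_pos (qR_pos hq)

theorem thq_le : thq q ≤ Real.pi / 3 := by
  apply div_le_div_of_nonneg_left Real.pi_pos.le (by norm_num)
  exact_mod_cast hq

theorem cos_thq_ge : 1/2 ≤ Real.cos (thq q) := by
  have h1 : Real.cos (Real.pi/3) ≤ Real.cos (thq q) := by
    apply Real.cos_le_cos_of_nonneg_of_le_pi (thq_pos hq).le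
    · linarith [Real.pi_pos]
    · exact thq_le hq
  rw [Real.cos_pi_div_three] at h1
  exact h1

theorem lam_ge_one : 1 ≤ lamq q := by
  have := cos_thq_ge hq
  rw [lamq_eq]; linarith

theorem lam_pos : 0 < lamq q := lt_of_lt_of_le one_pos (lam_ge_one hq)

theorem hq_even (he : Even q) : q = 2 * hQ q + 2 := by
  rw [hQ, if_pos he]
  rcases he with ⟨k, hk⟩
  omega

theorem hq_odd (ho : ¬ Even q) : q = 2 * hQ q + 3 := by
  rw [hQ, if_neg ho]
  rw [Nat.even_iff] at ho
  omega

theorem ang_mono {k m : ℕ} (hkm : k ≤ m) : ang q k ≤ ang q m := by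
  have := (thq_pos hq).le
  apply mul_le_mul_of_nonneg_right _ this
  exact_mod_cast hkm

theorem ang_nonneg (k : ℕ) : 0 ≤ ang q k := by
  have := (thq_pos hq).le
  rw [ang]; positivity

theorem ang_even_top (he : Even q) : ang q (hQ q + 1) = Real.pi / 2 := by
  have hqq : (q:ℝ) = 2*(hQ q:ℝ)+2 := by exact_mod_cast congrArg (Nat.cast (R := ℝ)) (hq_even hq he)
  have hden : (q:ℝ) ≠ 0 := (qR_pos hq).ne'
  rw [ang, thq]
  rw [hqq] at hden ⊢
  push_cast
  field_simp

theorem ang_odd_pi (ho : ¬ Even q) : ang q (hQ q + 2) = Real.pi - ang q (hQ q + 1) := by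
  have hqq : (q:ℝ) = 2*(hQ q:ℝ)+3 := by exact_mod_cast congrArg (Nat.cast (R := ℝ)) (hq_odd hq ho)
  have hden : (q:ℝ) ≠ 0 := (qR_pos hq).ne'
  rw [ang, ang, thq]
  rw [hqq] at hden ⊢
  push_cast
  field_simp
  ring

theorem ang_top_lt_odd (ho : ¬ Even q) : ang q (hQ q + 1) < Real.pi / 2 := by
  have hqq : (q:ℝ) = 2*(hQ q:ℝ)+3 := by exact_mod_cast congrArg (Nat.cast (R := ℝ)) (hq_odd hq ho)
  rw [ang, thq, mul_div_assoc']
  rw [div_lt_div_iff₀ (qR_pos hq) (by norm_num : (0:ℝ) < 2), hqq]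
  push_cast
  nlinarith [Real.pi_pos]

theorem ang_lt_pi_half {k : ℕ} (hk : k ≤ hQ q) : ang q k < Real.pi / 2 := by
  rcases Classical.em (Even q) with he | ho
  · have h1 : ang q k ≤ ang q (hQ q) := ang_mono hq hk
    have h2 : ang q (hQ q) = Real.pi/2 - thq q := by
      have := ang_even_top hq he
      rw [ang_succ] at this
      linarith
    have := thq_pos hq
    linarith
  · exact lt_of_le_of_lt (ang_mono hq (Nat.le_succ_of_le hk)) (ang_top_lt_odd hq ho)

theorem ang_le_pi_half {k : ℕ} (hk : k ≤ hQ q + 1) : ang q k ≤ Real.pi / 2 := by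
  rcases Classical.em (Even q) with he | ho
  · exact (ang_even_top hq he) ▸ ang_mono hq hk
  · exact (le_of_lt (lt_of_le_of_lt (ang_mono hq hk) (ang_top_lt_odd hq ho)))

theorem cos_pos_k {k : ℕ} (hk : k ≤ hQ q) : 0 < Real.cos (ang q k) := by
  apply Real.cos_pos_of_mem_Ioo
  constructor
  · have := ang_nonneg hq k
    have := Real.pi_pos
    linarith
  · exact ang_lt_pi_half hq hk

theorem cos_pos_k1_odd (ho : ¬ Even q) {k : ℕ} (hk : k ≤ hQ q + 1) :
    0 < Real.cos (ang q k) := by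
  apply Real.cos_pos_of_mem_Ioo
  constructor
  · have := ang_nonneg hq k
    have := Real.pi_pos
    linarith
  · exact lt_of_le_of_lt (ang_mono hq hk) (ang_top_lt_odd hq ho)

theorem cos_nonneg_k {k : ℕ} (hk : k ≤ hQ q + 1) : 0 ≤ Real.cos (ang q k) := by
  apply Real.cos_nonneg_of_mem_Icc
  constructor
  · have := ang_nonneg hq k
    have := Real.pi_pos
    linarith
  · exact ang_le_pi_half hq hk

theorem sin_pos_k {k : ℕ} (h1 : 1 ≤ k) (hk : k ≤ hQ q + 1) : 0 < Real.sin (ang q k) := by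
  apply Real.sin_pos_of_pos_of_lt_pi
  · have : ang q 1 ≤ ang q k := ang_mono hq h1
    have h2 : ang q 1 = thq q := by rw [ang]; push_cast; ring
    have := thq_pos hq
    linarith
  · have := ang_le_pi_half hq hk
    have := Real.pi_pos
    linarith

theorem sin_nonneg_k {k : ℕ} (hk : k ≤ hQ q + 2) : 0 ≤ Real.sin (ang q k) := by
  apply Real.sin_nonneg_of_nonneg_of_le_pi (ang_nonneg hq k)
  have h1 : ang q k ≤ ang q (hQ q + 2) := ang_mono hq hk
  have h2 : ang q (hQ q + 2) = ang q (hQ q + 1) + thq q := ang_succ q (hQ q + 1)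
  have h3 := ang_le_pi_half hq (le_refl (hQ q + 1))
  have h4 := thq_le hq
  have := Real.pi_pos
  linarith

theorem even_cos_top (he : Even q) : Real.cos (ang q (hQ q + 1)) = 0 := by
  rw [ang_even_top hq he, Real.cos_pi_div_two]

theorem odd_cos_flip (ho : ¬ Even q) :
    Real.cos (ang q (hQ q + 2)) = - Real.cos (ang q (hQ q + 1)) := by
  rw [ang_odd_pi hq ho, Real.cos_pi_sub]

theorem odd_sin_flip (ho : ¬ Even q) :
    Real.sin (ang q (hQ q + 2)) = Real.sin (ang q (hQ q + 1)) := by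
  rw [ang_odd_pi hq ho, Real.sin_pi_sub]

theorem odd_cos_h (ho : ¬ Even q) :
    Real.cos (ang q (hQ q)) = (1 + lamq q) * Real.cos (ang q (hQ q + 1)) := by
  have h := cos_chain q (hQ q)
  rw [odd_cos_flip hq ho] at h
  linarith

theorem odd_sin_h (ho : ¬ Even q) :
    Real.sin (ang q (hQ q)) = (lamq q - 1) * Real.sin (ang q (hQ q + 1)) := by
  have h := sin_chain q (hQ q)
  rw [odd_sin_flip hq ho] at h
  linarith

end basic

theorem floorstar_bounds (t : ℝ) : 0 ≤ t - floorstar t ∧ t - floorstar t ≤ 1 := by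
  rw [floorstar]
  split_ifs with h
  · push_cast
    constructor
    · linarith [Int.ceil_lt_add_one t]
    · linarith [Int.le_ceil t]
  · constructor
    · linarith [Int.floor_le t]
    · linarith [Int.lt_floor_add_one t]

theorem nearest_remainder (lam y : ℝ) (hl : 0 < lam) :
    -(lam/2) ≤ y - (nearestLam lam y : ℝ) * lam ∧
      y - (nearestLam lam y : ℝ) * lam ≤ lam/2 := by
  rw [nearestLam]
  obtain ⟨h1, h2⟩ := floorstar_bounds (y/lam + 1/2)
  set m := floorstar (y/lam + 1/2) with hm
  have hy : y - (m:ℝ)*lam = lam * ((y/lam + 1/2) - m) - lam/2 := by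
    field_simp
    ring
  constructor
  · rw [hy]; nlinarith
  · rw [hy]; nlinarith

end CF11
namespace CF11

theorem not_forbidden_nil (q : ℕ) : ¬ IsForbidden q [] := by
  rintro ⟨ε, hε, hc | hc⟩
  · apply_fun List.length at hc
    simp at hc
  · split_ifs at hc with he
    · obtain ⟨m, hm, hB⟩ := hc
      apply_fun List.length at hB
      simp at hB
    · obtain ⟨m, hm, hB⟩ := hc
      apply_fun List.length at hB
      simp at hB

theorem regular_nil (q : ℕ) : RegularList q [] := by
  intro B hB
  rw [List.eq_nil_of_infix_nil hB]
  exact not_forbidden_nil q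

theorem regular_suffix {q : ℕ} {u L : List ℤ} (h : RegularList q (u ++ L)) :
    RegularList q L := by
  intro B hB
  exact h B (hB.trans (List.suffix_append u L).isInfix)

theorem regular_cons {q : ℕ} {a : ℤ} {L : List ℤ} (h : RegularList q (a :: L)) :
    RegularList q L := regular_suffix (u := [a]) h

theorem rep_cons (n : ℕ) (ε : ℤ) (M : List ℤ) :
    List.replicate n ε ++ ε :: M = List.replicate (n+1) ε ++ M := by
  rw [List.replicate_succ']
  simp

theorem eps_sq {ε : ℤ} (hε : ε = 1 ∨ ε = -1) (z : ℤ) : ε * (ε * z) = z := by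
  rcases hε with h | h <;> rw [h] <;> ring

theorem forb_rep {q : ℕ} {ε : ℤ} (hε : ε = 1 ∨ ε = -1) (L : List ℤ) :
    ¬ RegularList q (List.replicate (hQ q + 1) ε ++ L) := by
  intro h
  exact h (List.replicate (hQ q + 1) ε) (List.prefix_append _ _).isInfix
    ⟨ε, hε, Or.inl rfl⟩

theorem forb_even {q : ℕ} (he : Even q) {ε z : ℤ} (hε : ε = 1 ∨ ε = -1)
    (hz : 1 ≤ ε * z) (L : List ℤ) :
    ¬ RegularList q (List.replicate (hQ q) ε ++ z :: L) := by
  intro h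
  apply h (List.replicate (hQ q) ε ++ [z])
  · have : List.replicate (hQ q) ε ++ z :: L = (List.replicate (hQ q) ε ++ [z]) ++ L := by simp
    rw [this]
    exact (List.prefix_append _ _).isInfix
  · refine ⟨ε, hε, Or.inr ?_⟩
    rw [if_pos he]
    exact ⟨ε * z, hz, by rw [eps_sq hε z]⟩

theorem forb_odd {q : ℕ} (ho : ¬ Even q) {ε z : ℤ} (hε : ε = 1 ∨ ε = -1)
    (hz : 1 ≤ ε * z) (L : List ℤ) :
    ¬ RegularList q (List.replicate (hQ q) ε ++ (ε * 2) ::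
        (List.replicate (hQ q) ε ++ z :: L)) := by
  intro h
  apply h (List.replicate (hQ q) ε ++ (ε * 2) :: (List.replicate (hQ q) ε ++ [z]))
  · have : List.replicate (hQ q) ε ++ (ε*2) :: (List.replicate (hQ q) ε ++ z :: L) =
        (List.replicate (hQ q) ε ++ (ε*2) :: (List.replicate (hQ q) ε ++ [z])) ++ L := by
      simp
    rw [this]
    exact (List.prefix_append _ _).isInfix
  · refine ⟨ε, hε, Or.inr ?_⟩
    rw [if_neg ho]
    exact ⟨ε * z, hz, by rw [eps_sq hε z]⟩

theorem isForbidden_neg {q : ℕ} {B : List ℤ} (h : IsForbidden q B) :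
    IsForbidden q (B.map (fun z => -z)) := by
  obtain ⟨ε, hε, hc⟩ := h
  refine ⟨-ε, by rcases hε with h | h <;> simp [h], ?_⟩
  rcases hc with hc | hc
  · left
    rw [hc, List.map_replicate]
  · right
    split_ifs with he
    · rw [if_pos he] at hc
      obtain ⟨m, hm, hB⟩ := hc
      refine ⟨m, hm, ?_⟩
      rw [hB]
      simp [List.map_replicate]
    · rw [if_neg he] at hc
      obtain ⟨m, hm, hB⟩ := hc
      refine ⟨m, hm, ?_⟩
      rw [hB]
      simp [List.map_replicate]

theorem regular_neg {q : ℕ} {L : List ℤ} (h : RegularList q L) :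
    RegularList q (L.map (fun z => -z)) := by
  intro B hB hf
  have h2 : B.map (fun z => -z) <:+: (L.map (fun z => -z)).map (fun z => -z) :=
    hB.map _
  have h3 : (L.map (fun z => -z)).map (fun z => -z) = L := by
    simp
  rw [h3] at h2
  exact h (B.map (fun z => -z)) h2 (isForbidden_neg hf)

theorem nonzero_neg {L : List ℤ} (h : ∀ z ∈ L, z ≠ 0) :
    ∀ z ∈ L.map (fun z => -z), z ≠ 0 := by
  intro z hz
  simp only [List.mem_map] at hz
  obtain ⟨w, hw, rfl⟩ := hz
  simpa using h w hw

/-- an infix of a window of `a` is itself a window of `a`. -/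
theorem window_infix {a : ℕ → ℤ} {l len : ℕ} {B : List ℤ}
    (h : B <:+: List.ofFn fun j : Fin len => a (l + (j : ℕ))) :
    ∃ l', B = List.ofFn fun j : Fin B.length => a (l' + (j : ℕ)) := by
  obtain ⟨u, v, huv⟩ := h
  refine ⟨l + u.length, ?_⟩
  have hlen : u.length + (B.length + v.length) = len := by
    apply_fun List.length at huv
    simpa using huv
  apply List.ext_getElem (by simp)
  intro i hi hi'
  have e1 : B[i]? = some (a (l + (u.length + i))) := by
    have h1 : (u ++ B ++ v)[u.length + i]? = B[i]? := by
      rw [List.append_assoc, List.getElem?_append_right (by omega : u.length ≤ u.length + i)]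
      rw [Nat.add_sub_cancel_left]
      exact List.getElem?_append_left hi
    rw [huv] at h1
    rw [List.getElem?_ofFn] at h1
    rw [dif_pos (by omega : u.length + i < len)] at h1
    exact h1.symm
  have e2 : B[i]? = some B[i] := List.getElem?_eq_getElem hi
  rw [e2] at e1
  have e3 : B[i] = a (l + (u.length + i)) := Option.some.inj e1
  rw [e3, List.getElem_ofFn]
  show a (l + (u.length + i)) = a (l + u.length + i)
  congr 1
  omega

theorem regularSeq_window {q : ℕ} {a : ℕ → ℤ} (h : RegularSeq q a) (l len : ℕ) :
    RegularList q (List.ofFn fun j : Fin len => a (l + (j : ℕ))) := by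
  intro B hB hf
  obtain ⟨l', hB'⟩ := window_infix hB
  rw [hB'] at hf
  exact h l' B.length hf

theorem regularSeq_shift {q : ℕ} {a : ℕ → ℤ} (h : RegularSeq q a) :
    RegularSeq q (fun i => a (i + 1)) := by
  intro l len
  have e : (List.ofFn fun j : Fin len => a (l + (j : ℕ) + 1)) =
      (List.ofFn fun j : Fin len => a ((l + 1) + (j : ℕ))) := by
    congr 1
    funext j
    congr 1
    omega
  rw [e]
  exact h (l + 1) len

end CF11
namespace CF11

noncomputable def Bj (q j : ℕ) : ℝ := Real.cos (ang q (j+1)) / Real.cos (ang q j)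
noncomputable def Ci (q k : ℕ) : ℝ := Real.sin (ang q k) / Real.sin (ang q (k+1))

section bc
variable {q : ℕ} (hq : 3 ≤ q)
include hq

theorem Bj_zero : Bj q 0 = lamq q / 2 := by
  have h0 : ang q 0 = 0 := by rw [ang]; push_cast; ring
  have h1 : ang q 1 = thq q := by rw [ang]; push_cast; ring
  rw [Bj, h0, h1, Real.cos_zero, div_one, lamq_eq]
  ring

theorem Bj_nonneg {j : ℕ} (hj : j ≤ hQ q) : 0 ≤ Bj q j :=
  div_nonneg (cos_nonneg_k hq (by omega)) (cos_pos_k hq hj).le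

theorem Ci_nonneg {k : ℕ} (hk : k ≤ hQ q) : 0 ≤ Ci q k :=
  div_nonneg (sin_nonneg_k hq (by omega)) (sin_pos_k hq (by omega) (by omega)).le

theorem lam_sub_Bj {j : ℕ} (hj1 : j + 1 ≤ hQ q) :
    lamq q - Bj q (j+1) = Real.cos (ang q j) / Real.cos (ang q (j+1)) := by
  have hc : (0:ℝ) < Real.cos (ang q (j+1)) := cos_pos_k hq hj1
  have key := cos_chain q j
  rw [Bj]
  field_simp
  linarith [key]

theorem lam_sub_Ci {k : ℕ} (hk1 : 1 ≤ k) (hk : k ≤ hQ q) :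
    lamq q - Ci q (k-1) = Real.sin (ang q (k+1)) / Real.sin (ang q k) := by
  have e1 : k - 1 + 1 = k := by omega
  have e2 : k - 1 + 2 = k + 1 := by omega
  have key := sin_chain q (k-1)
  rw [e1, e2] at key
  have hs : (0:ℝ) < Real.sin (ang q k) := sin_pos_k hq hk1 (by omega)
  rw [Ci, e1]
  field_simp
  linarith [key]

end bc

theorem neg_inv_ge {c d : ℝ} (hc : 0 < c) (hcd : c ≤ d) : -(1/c) ≤ -1/d := by
  have h := one_div_le_one_div_of_le hc hcd
  have e : (-1 : ℝ)/d = -(1/d) := by ring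
  rw [e]
  linarith

theorem main_nil (q : ℕ) (hq : 3 ≤ q) :
    Kl (lamq q) [] ≠ 0 ∧
    (∀ j, j ≤ hQ q → RegularList q (List.replicate j 1 ++ []) →
      -(Bj q j) ≤ Vl (lamq q) []) ∧
    (∀ k, k ≤ hQ q → RegularList q (List.replicate (hQ q) 1 ++ 2 ::
        (List.replicate (hQ q - k) 1 ++ [])) →
      -(Ci q k) ≤ Vl (lamq q) []) := by
  refine ⟨by rw [Kl_nil]; norm_num, ?_, ?_⟩
  · intro j hj _
    rw [Vl_nil]
    have := Bj_nonneg hq hj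
    linarith
  · intro k hk _
    rw [Vl_nil]
    have := Ci_nonneg hq hk
    linarith

theorem main_half (q : ℕ) (hq : 3 ≤ q) :
    ∀ n (L : List ℤ), L.length ≤ n → (∀ z ∈ L, z ≠ 0) → RegularList q L →
      Kl (lamq q) L ≠ 0 ∧
      (∀ j, j ≤ hQ q → RegularList q (List.replicate j 1 ++ L) →
        -(Bj q j) ≤ Vl (lamq q) L) ∧
      (∀ k, k ≤ hQ q → RegularList q (List.replicate (hQ q) 1 ++ 2 ::
          (List.replicate (hQ q - k) 1 ++ L)) →
        -(Ci q k) ≤ Vl (lamq q) L) := by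
  intro n
  induction n with
  | zero =>
    intro L hlen _ _
    have hL : L = [] := List.length_eq_zero_iff.mp (Nat.le_zero.mp hlen)
    subst hL
    exact main_nil q hq
  | succ n IH =>
    intro L hlen hnz hreg
    rcases L with _ | ⟨a, M⟩
    · exact main_nil q hq
    have hlenM : M.length ≤ n := by
      simp only [List.length_cons] at hlen
      omega
    have hnzM : ∀ z ∈ M, z ≠ 0 := fun z hz => hnz z (List.mem_cons_of_mem a hz)
    have hregM : RegularList q M := regular_cons hreg
    obtain ⟨hKM, hBM, hCM⟩ := IH M hlenM hnzM hregM
    obtain ⟨_, hBMn, _⟩ := IH (M.map (fun z => -z)) (by rw [List.length_map]; exact hlenM)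
      (nonzero_neg hnzM) (regular_neg hregM)
    have hlam1 : 1 ≤ lamq q := lam_ge_one hq
    have hlampos : 0 < lamq q := lam_pos hq
    have hVlo : -(lamq q/2) ≤ Vl (lamq q) M := by
      have := hBM 0 (Nat.zero_le _) (by simpa using hregM)
      rwa [Bj_zero hq] at this
    have hVhi : Vl (lamq q) M ≤ lamq q/2 := by
      have := hBMn 0 (Nat.zero_le _) (by simpa using regular_neg hregM)
      rw [Bj_zero hq, Vl_neg] at this
      linarith
    have ha : a ≠ 0 := hnz a List.mem_cons_self
    have hdneg : a < 0 → (a:ℝ) * lamq q + Vl (lamq q) M ≤ -(lamq q/2) := by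
      intro hneg
      have haR : (a:ℝ) ≤ -1 := by exact_mod_cast (by omega : a ≤ -1)
      have hprod : (a:ℝ) * lamq q ≤ -1 * lamq q :=
        mul_le_mul_of_nonneg_right haR hlampos.le
      linarith
    have hdpos : 0 < a → lamq q/2 ≤ (a:ℝ) * lamq q + Vl (lamq q) M := by
      intro hpos
      have haR : (1:ℝ) ≤ (a:ℝ) := by exact_mod_cast (by omega : 1 ≤ a)
      have hprod : 1 * lamq q ≤ (a:ℝ) * lamq q :=
        mul_le_mul_of_nonneg_right haR hlampos.le
      linarith
    have hdne : (a:ℝ) * lamq q + Vl (lamq q) M ≠ 0 := by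
      rcases lt_or_gt_of_ne ha with hneg | hpos
      · have := hdneg hneg; apply ne_of_lt; linarith
      · have := hdpos hpos; apply ne_of_gt; linarith
    obtain ⟨hVc, hKc⟩ := Vl_cons (lamq q) a M hKM hdne
    refine ⟨?_, ?_, ?_⟩
    · rw [hKc]
      exact mul_ne_zero hdne hKM
    -- clause (b)
    · intro j hj hctx
      rcases lt_or_gt_of_ne ha with hneg | hpos
      · -- a negative : value positive
        have hd := hdneg hneg
        have hpos' : 0 < Vl (lamq q) (a :: M) := by
          rw [hVc]
          apply div_pos_of_neg_of_neg (by norm_num)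
          linarith
        have := Bj_nonneg hq hj
        linarith
      · rcases eq_or_lt_of_le (by omega : (1:ℤ) ≤ a) with ha1 | ha2
        · -- a = 1
          have ha1' : a = 1 := ha1.symm
          rw [ha1'] at hctx
          rw [rep_cons] at hctx
          by_cases hjh : j = hQ q
          · exfalso
            rw [hjh] at hctx
            exact forb_rep (Or.inl rfl) M hctx
          · have hj1 : j + 1 ≤ hQ q := by omega
            have hb := hBM (j+1) hj1 hctx
            have hkey := lam_sub_Bj hq hj1
            have hcj : (0:ℝ) < Real.cos (ang q j) := cos_pos_k hq (by omega)
            have hcj1 : (0:ℝ) < Real.cos (ang q (j+1)) := cos_pos_k hq hj1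
            have hcpos : 0 < Real.cos (ang q j) / Real.cos (ang q (j+1)) :=
              div_pos hcj hcj1
            have hda : (a:ℝ) * lamq q + Vl (lamq q) M = lamq q + Vl (lamq q) M := by
              rw [ha1']; push_cast; ring
            have hcd : Real.cos (ang q j) / Real.cos (ang q (j+1)) ≤
                (a:ℝ) * lamq q + Vl (lamq q) M := by
              rw [hda]; linarith
            have hinv : 1 / (Real.cos (ang q j) / Real.cos (ang q (j+1))) = Bj q j := by
              rw [one_div_div]; rfl
            rw [hVc, ← hinv]
            exact neg_inv_ge hcpos hcd
        · -- a ≥ 2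
          have ha2' : (2:ℤ) ≤ a := ha2
          have haR : (2:ℝ) ≤ (a:ℝ) := by exact_mod_cast ha2'
          have hprod : 2 * lamq q ≤ (a:ℝ) * lamq q :=
            mul_le_mul_of_nonneg_right haR hlampos.le
          by_cases hjh : j = hQ q
          · rcases Classical.em (Even q) with he | ho
            · exfalso
              rw [hjh] at hctx
              exact forb_even he (Or.inl rfl) (by omega : (1:ℤ) ≤ 1 * a) M hctx
            · -- odd q, j = h
              have hch1 : (0:ℝ) < Real.cos (ang q (hQ q + 1)) :=
                cos_pos_k1_odd hq ho le_rfl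
              have hch : (0:ℝ) < Real.cos (ang q (hQ q)) := cos_pos_k hq le_rfl
              have hBjh : Bj q (hQ q) = 1/(1 + lamq q) := by
                rw [Bj, odd_cos_h hq ho]
                rw [eq_div_iff (by linarith : (1:ℝ) + lamq q ≠ 0)]
                field_simp
              have hcpos : (0:ℝ) < 1 + lamq q := by linarith
              have hinv : 1/(1 + lamq q) = Bj q (hQ q) := hBjh.symm
              rcases eq_or_lt_of_le ha2' with ha2e | ha3
              · -- a = 2
                have ha2'' : a = 2 := ha2e.symm
                rw [hjh, ha2''] at hctx
                have hcM := hCM (hQ q) le_rfl (by simpa using hctx)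
                have hCih : Ci q (hQ q) = lamq q - 1 := by
                  have hs1 : (0:ℝ) < Real.sin (ang q (hQ q + 1)) :=
                    sin_pos_k hq (by omega) le_rfl
                  rw [Ci, odd_sin_h hq ho]
                  field_simp
                have hda : (a:ℝ) * lamq q + Vl (lamq q) M =
                    2 * lamq q + Vl (lamq q) M := by rw [ha2'']; push_cast; ring
                have hcd : 1 + lamq q ≤ (a:ℝ) * lamq q + Vl (lamq q) M := by
                  rw [hda]
                  rw [hCih] at hcM
                  linarith
                rw [hjh, hVc, ← hinv]
                exact neg_inv_ge hcpos hcd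
              · -- a ≥ 3
                have haR3 : (3:ℝ) ≤ (a:ℝ) := by exact_mod_cast ha3
                have hprod3 : 3 * lamq q ≤ (a:ℝ) * lamq q :=
                  mul_le_mul_of_nonneg_right haR3 hlampos.le
                have hcd : 1 + lamq q ≤ (a:ℝ) * lamq q + Vl (lamq q) M := by
                  nlinarith
                rw [hjh, hVc, ← hinv]
                exact neg_inv_ge hcpos hcd
          · -- j < h
            have hj1 : j + 1 ≤ hQ q := by omega
            have hcj : (0:ℝ) < Real.cos (ang q j) := cos_pos_k hq (by omega)
            have hcj1 : (0:ℝ) < Real.cos (ang q (j+1)) := cos_pos_k hq hj1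
            have hcpos : 0 < Real.cos (ang q j) / Real.cos (ang q (j+1)) :=
              div_pos hcj hcj1
            have hratio : Real.cos (ang q j) / Real.cos (ang q (j+1)) ≤ lamq q := by
              rw [div_le_iff₀ hcj1]
              have h1 := cos_chain q j
              have h2 := cos_nonneg_k hq (by omega : j + 2 ≤ hQ q + 1)
              linarith
            have hcd : Real.cos (ang q j) / Real.cos (ang q (j+1)) ≤
                (a:ℝ) * lamq q + Vl (lamq q) M := by linarith
            have hinv : 1 / (Real.cos (ang q j) / Real.cos (ang q (j+1))) = Bj q j := by
              rw [one_div_div]; rfl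
            rw [hVc, ← hinv]
            exact neg_inv_ge hcpos hcd
    -- clause (c)
    · intro k hk hctx
      rcases Classical.em (Even q) with he | ho
      · exfalso
        exact forb_even he (Or.inl rfl) (by norm_num : (1:ℤ) ≤ 1 * 2) _ hctx
      rcases lt_or_gt_of_ne ha with hneg | hpos
      · have hd := hdneg hneg
        have hpos' : 0 < Vl (lamq q) (a :: M) := by
          rw [hVc]
          apply div_pos_of_neg_of_neg (by norm_num)
          linarith
        have := Ci_nonneg hq hk
        linarith
      · rcases eq_or_lt_of_le (by omega : (1:ℤ) ≤ a) with ha1 | ha2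
        · -- a = 1
          have ha1' : a = 1 := ha1.symm
          rw [ha1'] at hctx
          by_cases hk0 : k = 0
          · exfalso
            rw [hk0] at hctx
            exact forb_odd ho (Or.inl rfl) (by norm_num : (1:ℤ) ≤ 1 * 1) M
              (by simpa using hctx)
          · have hk1 : 1 ≤ k := by omega
            rw [rep_cons] at hctx
            rw [(by omega : hQ q - k + 1 = hQ q - (k-1))] at hctx
            have hcM := hCM (k-1) (by omega) hctx
            have hkey := lam_sub_Ci hq hk1 hk
            have hsk : (0:ℝ) < Real.sin (ang q k) := sin_pos_k hq hk1 (by omega)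
            have hsk1 : (0:ℝ) < Real.sin (ang q (k+1)) := sin_pos_k hq (by omega) (by omega)
            have hcpos : 0 < Real.sin (ang q (k+1)) / Real.sin (ang q k) :=
              div_pos hsk1 hsk
            have hda : (a:ℝ) * lamq q + Vl (lamq q) M = lamq q + Vl (lamq q) M := by
              rw [ha1']; push_cast; ring
            have hcd : Real.sin (ang q (k+1)) / Real.sin (ang q k) ≤
                (a:ℝ) * lamq q + Vl (lamq q) M := by
              rw [hda]; linarith
            have hinv : 1 / (Real.sin (ang q (k+1)) / Real.sin (ang q k)) = Ci q k := by
              rw [one_div_div]; rfl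
            rw [hVc, ← hinv]
            exact neg_inv_ge hcpos hcd
        · -- a ≥ 2
          have ha2' : (2:ℤ) ≤ a := ha2
          have haR : (2:ℝ) ≤ (a:ℝ) := by exact_mod_cast ha2'
          have hprod : 2 * lamq q ≤ (a:ℝ) * lamq q :=
            mul_le_mul_of_nonneg_right haR hlampos.le
          by_cases hk0 : k = 0
          · exfalso
            rw [hk0] at hctx
            exact forb_odd ho (Or.inl rfl) (by omega : (1:ℤ) ≤ 1 * a) M
              (by simpa using hctx)
          · have hk1 : 1 ≤ k := by omega
            have hsk : (0:ℝ) < Real.sin (ang q k) := sin_pos_k hq hk1 (by omega)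
            have hsk1 : (0:ℝ) < Real.sin (ang q (k+1)) := sin_pos_k hq (by omega) (by omega)
            have hcpos : 0 < Real.sin (ang q (k+1)) / Real.sin (ang q k) :=
              div_pos hsk1 hsk
            have hratio : Real.sin (ang q (k+1)) / Real.sin (ang q k) ≤ lamq q := by
              rw [div_le_iff₀ hsk]
              have e1 : k - 1 + 1 = k := by omega
              have e2 : k - 1 + 2 = k + 1 := by omega
              have h1 := sin_chain q (k-1)
              rw [e1, e2] at h1
              have h2 : 0 ≤ Real.sin (ang q (k-1)) := sin_nonneg_k hq (by omega)
              linarith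
            have hcd : Real.sin (ang q (k+1)) / Real.sin (ang q k) ≤
                (a:ℝ) * lamq q + Vl (lamq q) M := by linarith
            have hinv : 1 / (Real.sin (ang q (k+1)) / Real.sin (ang q k)) = Ci q k := by
              rw [one_div_div]; rfl
            rw [hVc, ← hinv]
            exact neg_inv_ge hcpos hcd

theorem main_interval (q : ℕ) (hq : 3 ≤ q) (L : List ℤ)
    (hnz : ∀ z ∈ L, z ≠ 0) (hreg : RegularList q L) :
    Kl (lamq q) L ≠ 0 ∧ -(lamq q/2) ≤ Vl (lamq q) L ∧ Vl (lamq q) L ≤ lamq q/2 := by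
  obtain ⟨hK, hB, _⟩ := main_half q hq L.length L le_rfl hnz hreg
  obtain ⟨_, hBn, _⟩ := main_half q hq L.length (L.map (fun z => -z))
    (by rw [List.length_map]) (nonzero_neg hnz) (regular_neg hreg)
  refine ⟨hK, ?_, ?_⟩
  · have := hB 0 (Nat.zero_le _) (by simpa using hreg)
    rwa [Bj_zero hq] at this
  · have := hBn 0 (Nat.zero_le _) (by simpa using regular_neg hreg)
    rw [Bj_zero hq, Vl_neg] at this
    linarith

theorem main_cons (q : ℕ) (hq : 3 ≤ q) (a : ℤ) (M : List ℤ)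
    (hnz : ∀ z ∈ (a :: M), z ≠ 0) (hreg : RegularList q (a :: M)) :
    ((a:ℝ) * lamq q + Vl (lamq q) M ≠ 0) ∧
    Vl (lamq q) (a :: M) = -1/((a:ℝ) * lamq q + Vl (lamq q) M) ∧
    Kl (lamq q) (a :: M) ≠ 0 ∧ Kl (lamq q) M ≠ 0 := by
  have hnzM : ∀ z ∈ M, z ≠ 0 := fun z hz => hnz z (List.mem_cons_of_mem a hz)
  obtain ⟨hKM, hVlo, hVhi⟩ := main_interval q hq M hnzM (regular_cons hreg)
  have ha : a ≠ 0 := hnz a List.mem_cons_self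
  have hlampos : 0 < lamq q := lam_pos hq
  have hdne : (a:ℝ) * lamq q + Vl (lamq q) M ≠ 0 := by
    rcases lt_or_gt_of_ne ha with hneg | hpos
    · have haR : (a:ℝ) ≤ -1 := by exact_mod_cast (by omega : a ≤ -1)
      have hprod : (a:ℝ) * lamq q ≤ -1 * lamq q :=
        mul_le_mul_of_nonneg_right haR hlampos.le
      apply ne_of_lt; linarith
    · have haR : (1:ℝ) ≤ (a:ℝ) := by exact_mod_cast (by omega : 1 ≤ a)
      have hprod : 1 * lamq q ≤ (a:ℝ) * lamq q :=
        mul_le_mul_of_nonneg_right haR hlampos.le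
      apply ne_of_gt; linarith
  obtain ⟨hVc, hKc⟩ := Vl_cons (lamq q) a M hKM hdne
  exact ⟨hdne, hVc, by rw [hKc]; exact mul_ne_zero hdne hKM, hKM⟩

end CF11
namespace CF11

/-- prefix list of an infinite digit sequence -/
def pref (f : ℕ → ℤ) (n : ℕ) : List ℤ := List.ofFn fun j : Fin n => f j

theorem pref_length (f : ℕ → ℤ) (n : ℕ) : (pref f n).length = n := List.length_ofFn

theorem pref_nonzero {f : ℕ → ℤ} (hnz : ∀ i, f i ≠ 0) (n : ℕ) :
    ∀ z ∈ pref f n, z ≠ 0 := by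
  intro z hz
  rw [pref, List.mem_ofFn] at hz
  obtain ⟨j, rfl⟩ := hz
  exact hnz j

theorem pref_regular {q : ℕ} {f : ℕ → ℤ} (hreg : RegularSeq q f) (n : ℕ) :
    RegularList q (pref f n) := by
  have h := regularSeq_window hreg 0 n
  have e : (List.ofFn fun j : Fin n => f (0 + (j:ℕ))) = pref f n := by
    rw [pref]
    congr 1
    funext j
    rw [Nat.zero_add]
  rwa [e] at h

theorem pref_PQ (lam : ℝ) (f : ℕ → ℤ) (n : ℕ) :
    cfP lam (fun k => if k = 0 then 0 else f (k-1)) n = Pl lam (pref f n) ∧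
    cfQ lam (fun k => if k = 0 then 0 else f (k-1)) n = Kl lam (pref f n) := by
  have hgetD : ∀ i ≤ n, (fun k => if k = 0 then (0:ℤ) else f (k-1)) i =
      (fun i => (((0:ℤ) :: pref f n)).getD i 0) i := by
    intro i hi
    cases i with
    | zero => rfl
    | succ j =>
      simp only [if_neg (Nat.succ_ne_zero j)]
      have hj : j < (pref f n).length := by rw [pref_length]; omega
      show f j = (pref f n).getD j 0
      have hsome : (pref f n)[j]? = some (f j) := by
        rw [pref, List.getElem?_ofFn, dif_pos (by omega : j < n)]
      rw [List.getD_eq_getElem _ _ hj]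
      have h2 := List.getElem?_eq_getElem hj
      rw [hsome] at h2
      exact Option.some.inj h2
  have h := cfPQ_ext lam _ _ n hgetD
  constructor
  · rw [h.1, Pl, pref_length]
  · rw [h.2, Kl, cfDenList, pref_length]

theorem pref_split (f : ℕ → ℤ) (n : ℕ) :
    pref f (n+1) = f 0 :: pref (fun i => f (i+1)) n := by
  rw [pref, List.ofFn_succ]
  rfl

theorem conv_shift (q : ℕ) (hq : 3 ≤ q) (f : ℕ → ℤ) (x : ℝ)
    (hnz : ∀ i, f i ≠ 0) (hreg : RegularSeq q f)
    (hconv : CFConvergesTo (lamq q) (fun n => if n = 0 then 0 else f (n-1)) x) :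
    (-(lamq q/2) ≤ x ∧ x ≤ lamq q/2) ∧ x ≠ 0 ∧
    (-(lamq q/2) ≤ -1/x - (f 0 : ℝ) * lamq q ∧ -1/x - (f 0 : ℝ) * lamq q ≤ lamq q/2) ∧
    CFConvergesTo (lamq q)
      (fun n => if n = 0 then 0 else f ((n-1)+1)) (-1/x - (f 0 : ℝ) * lamq q) := by
  obtain ⟨hQne, hlim⟩ := hconv
  have hlampos := lam_pos hq
  have hgnz : ∀ i, (fun i => f (i+1)) i ≠ 0 := fun i => hnz (i+1)
  have hgreg : RegularSeq q (fun i => f (i+1)) := regularSeq_shift hreg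
  have h_rel := cons_rel (lamq q) (fun n => if n = 0 then 0 else f (n-1))
      (fun n => if n = 0 then 0 else f ((n-1)+1)) rfl rfl (fun k => rfl)
  have hintf := fun n => main_interval q hq (pref f n) (pref_nonzero hnz n)
    (pref_regular hreg n)
  have hintg := fun n => main_interval q hq (pref (fun i => f (i+1)) n)
    (pref_nonzero hgnz n) (pref_regular hgreg n)
  have hPQf := fun n => pref_PQ (lamq q) f n
  have hPQg := fun n => pref_PQ (lamq q) (fun i => f (i+1)) n
  -- x bounds
  have hxlo : -(lamq q/2) ≤ x := by
    apply ge_of_tendsto' hlim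
    intro n
    rw [(hPQf n).1, (hPQf n).2]
    exact (hintf n).2.1
  have hxhi : x ≤ lamq q/2 := by
    apply le_of_tendsto' hlim
    intro n
    rw [(hPQf n).1, (hPQf n).2]
    exact (hintf n).2.2
  -- denominators of the shifted sequence
  have hQb : ∀ n, cfQ (lamq q) (fun n => if n = 0 then 0 else f ((n-1)+1)) n ≠ 0 := by
    intro n
    rw [(hPQg n).2]
    exact (hintg n).1
  have hPA : ∀ n, cfP (lamq q) (fun n => if n = 0 then 0 else f (n-1)) (n+1) ≠ 0 := by
    intro n
    rw [(h_rel n).1]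
    simpa using hQb n
  -- nonvanishing of the limit
  have hD : (0:ℝ) < |(f 0 : ℝ)| * lamq q + lamq q/2 := by
    have h0 : (0:ℝ) ≤ |(f 0 : ℝ)| := abs_nonneg _
    nlinarith
  have hlb : ∀ n, 1/(|(f 0 : ℝ)| * lamq q + lamq q/2) ≤
      |cfP (lamq q) (fun n => if n = 0 then 0 else f (n-1)) (n+1) /
        cfQ (lamq q) (fun n => if n = 0 then 0 else f (n-1)) (n+1)| := by
    intro n
    obtain ⟨hdne, hVc, _, _⟩ := main_cons q hq (f 0) (pref (fun i => f (i+1)) n)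
      (by rw [← pref_split f n]; exact pref_nonzero hnz (n+1))
      (by rw [← pref_split f n]; exact pref_regular hreg (n+1))
    have hval : cfP (lamq q) (fun n => if n = 0 then 0 else f (n-1)) (n+1) /
        cfQ (lamq q) (fun n => if n = 0 then 0 else f (n-1)) (n+1) =
        Vl (lamq q) (pref f (n+1)) := by
      rw [(hPQf (n+1)).1, (hPQf (n+1)).2]
      rfl
    rw [hval, pref_split f n, hVc]
    have h1 := (hintg n).2.1
    have h2 := (hintg n).2.2
    have habs0 : |(f 0:ℝ)*lamq q| = |(f 0 : ℝ)| * lamq q := by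
      rw [abs_mul, abs_of_pos hlampos]
    have hdabs : |(f 0:ℝ)*lamq q + Vl (lamq q) (pref (fun i => f (i+1)) n)| ≤
        |(f 0 : ℝ)| * lamq q + lamq q/2 := by
      have habs1 : |Vl (lamq q) (pref (fun i => f (i+1)) n)| ≤ lamq q/2 :=
        abs_le.mpr ⟨by linarith, h2⟩
      calc |(f 0:ℝ)*lamq q + Vl (lamq q) (pref (fun i => f (i+1)) n)|
          ≤ |(f 0:ℝ)*lamq q| + |Vl (lamq q) (pref (fun i => f (i+1)) n)| := abs_add_le _ _
        _ ≤ |(f 0 : ℝ)| * lamq q + lamq q/2 := by rw [habs0]; linarith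
    have habs : |(-1)/((f 0:ℝ)*lamq q + Vl (lamq q) (pref (fun i => f (i+1)) n))| =
        1/|(f 0:ℝ)*lamq q + Vl (lamq q) (pref (fun i => f (i+1)) n)| := by
      rw [abs_div]
      norm_num
    rw [habs]
    exact one_div_le_one_div_of_le (abs_pos.mpr hdne) hdabs
  have hxne : x ≠ 0 := by
    have htend := (hlim.comp (Filter.tendsto_add_atTop_nat 1)).abs
    have hge := ge_of_tendsto' htend hlb
    intro h0
    rw [h0, abs_zero] at hge
    have : (0:ℝ) < 1/(|(f 0 : ℝ)| * lamq q + lamq q/2) := by positivity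
    linarith
  -- tail limit identity
  have hQbP : ∀ n, cfQ (lamq q) (fun n => if n = 0 then 0 else f ((n-1)+1)) n =
      - cfP (lamq q) (fun n => if n = 0 then 0 else f (n-1)) (n+1) := by
    intro n
    have := (h_rel n).1
    linarith
  have hib : ∀ n, cfP (lamq q) (fun n => if n = 0 then 0 else f ((n-1)+1)) n /
      cfQ (lamq q) (fun n => if n = 0 then 0 else f ((n-1)+1)) n =
      -1/(cfP (lamq q) (fun n => if n = 0 then 0 else f (n-1)) (n+1) /
        cfQ (lamq q) (fun n => if n = 0 then 0 else f (n-1)) (n+1)) - (f 0:ℝ)*lamq q := by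
    intro n
    have h2 : cfQ (lamq q) (fun n => if n = 0 then 0 else f (n-1)) (n+1) =
        (f 0:ℝ)*lamq q * cfQ (lamq q) (fun n => if n = 0 then 0 else f ((n-1)+1)) n +
        cfP (lamq q) (fun n => if n = 0 then 0 else f ((n-1)+1)) n := (h_rel n).2
    have hQA := hQne (n+1)
    have hPA' := hPA n
    have e : cfP (lamq q) (fun n => if n = 0 then 0 else f ((n-1)+1)) n =
        cfQ (lamq q) (fun n => if n = 0 then 0 else f (n-1)) (n+1) +
        (f 0:ℝ)*lamq q * cfP (lamq q) (fun n => if n = 0 then 0 else f (n-1)) (n+1) := by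
      rw [hQbP n] at h2
      linarith
    rw [e, hQbP n]
    have hPA'' := hPA n
    have hQA' := hQne (n+1)
    generalize hp : cfP (lamq q) (fun n => if n = 0 then 0 else f (n - 1)) (n + 1) = P at hPA'' hQA' ⊢
    generalize hqq : cfQ (lamq q) (fun n => if n = 0 then 0 else f (n - 1)) (n + 1) = Q at hQA' ⊢
    rw [div_neg, add_div, mul_div_assoc, div_self hPA'', mul_one, neg_div, one_div_div]
    ring
  have hr1 : Filter.Tendsto (fun n => cfP (lamq q) (fun n => if n = 0 then 0 else f (n-1)) (n+1) /
      cfQ (lamq q) (fun n => if n = 0 then 0 else f (n-1)) (n+1)) Filter.atTop (nhds x) :=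
    hlim.comp (Filter.tendsto_add_atTop_nat 1)
  have htail : Filter.Tendsto (fun n =>
      cfP (lamq q) (fun n => if n = 0 then 0 else f ((n-1)+1)) n /
      cfQ (lamq q) (fun n => if n = 0 then 0 else f ((n-1)+1)) n) Filter.atTop
      (nhds (-1/x - (f 0:ℝ)*lamq q)) := by
    have h1 : Filter.Tendsto (fun n =>
        -1/(cfP (lamq q) (fun n => if n = 0 then 0 else f (n-1)) (n+1) /
          cfQ (lamq q) (fun n => if n = 0 then 0 else f (n-1)) (n+1))) Filter.atTop
        (nhds (-1/x)) := Filter.Tendsto.div tendsto_const_nhds hr1 hxne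
    have h2 := h1.sub_const ((f 0:ℝ)*lamq q)
    have hfe := funext hib
    rw [hfe]
    exact h2
  have hylo : -(lamq q/2) ≤ -1/x - (f 0:ℝ)*lamq q := by
    apply ge_of_tendsto' htail
    intro n
    rw [(hPQg n).1, (hPQg n).2]
    exact (hintg n).2.1
  have hyhi : -1/x - (f 0:ℝ)*lamq q ≤ lamq q/2 := by
    apply le_of_tendsto' htail
    intro n
    rw [(hPQg n).1, (hPQg n).2]
    exact (hintg n).2.2
  exact ⟨⟨hxlo, hxhi⟩, hxne, ⟨hylo, hyhi⟩, hQb, htail⟩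

end CF11
namespace CF11

def Conv (q : ℕ) (u : List ℤ ⊕ (ℕ → ℤ)) (y : ℝ) : Prop :=
  SeqRegular q u ∧ SeqConvTo (lamq q) u y

def hd : List ℤ ⊕ (ℕ → ℤ) → Option ℤ
  | Sum.inl [] => none
  | Sum.inl (a :: _) => some a
  | Sum.inr f => some (f 0)

def tl : List ℤ ⊕ (ℕ → ℤ) → List ℤ ⊕ (ℕ → ℤ)
  | Sum.inl [] => Sum.inl []
  | Sum.inl (_ :: M) => Sum.inl M
  | Sum.inr f => Sum.inr (fun i => f (i+1))

theorem tl_inl (L : List ℤ) : tl (Sum.inl L) = Sum.inl L.tail := by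
  cases L <;> rfl

theorem tl_iter_inl (L : List ℤ) : ∀ k, tl^[k] (Sum.inl L) = Sum.inl (L.drop k) := by
  intro k
  induction k with
  | zero => simp
  | succ k ih => rw [Function.iterate_succ_apply', ih, tl_inl, List.tail_drop]

theorem tl_iter_inr (f : ℕ → ℤ) : ∀ k, tl^[k] (Sum.inr f) = Sum.inr (fun i => f (i + k)) := by
  intro k
  induction k with
  | zero => simp
  | succ k ih =>
    rw [Function.iterate_succ_apply', ih]
    show Sum.inr (fun i => f (i + 1 + k)) = Sum.inr (fun i => f (i + (k+1)))
    congr 1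
    funext i
    congr 1
    omega

theorem hd_iter_inl (L : List ℤ) (k : ℕ) : hd (tl^[k] (Sum.inl L)) = L[k]? := by
  rw [tl_iter_inl, ← List.head?_drop]
  cases (L.drop k) <;> rfl

theorem hd_iter_inr (f : ℕ → ℤ) (k : ℕ) : hd (tl^[k] (Sum.inr f)) = some (f k) := by
  rw [tl_iter_inr]
  show some (f (0 + k)) = some (f k)
  rw [Nat.zero_add]

theorem conv_nil (q : ℕ) : Conv q (Sum.inl []) 0 := by
  refine ⟨⟨by simp, regular_nil q⟩, ⟨?_, ?_⟩⟩
  · show Kl (lamq q) [] ≠ 0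
    rw [Kl_nil]
    norm_num
  · exact Vl_nil (lamq q)

theorem fq_zero' (lam : ℝ) : fq lam 0 = 0 := by rw [fq, if_pos rfl]

theorem fq_ne_zero (lam : ℝ) (y : ℝ) (hy : y ≠ 0) :
    fq lam y = -1/y - (nearestLam lam (-1/y) : ℝ) * lam := by rw [fq, if_neg hy]

theorem near_digit (q : ℕ) (hq : 3 ≤ q) (w : ℝ) (c : ℤ)
    (h1 : -(lamq q/2) ≤ w - (c:ℝ)*lamq q) (h2 : w - (c:ℝ)*lamq q ≤ lamq q/2) :
    w - (nearestLam (lamq q) w : ℝ) * lamq q = w - (c:ℝ)*lamq q ∨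
    w - (nearestLam (lamq q) w : ℝ) * lamq q = lamq q/2 ∨
    w - (nearestLam (lamq q) w : ℝ) * lamq q = -(lamq q/2) := by
  have hlampos := lam_pos hq
  obtain ⟨hr1, hr2⟩ := nearest_remainder (lamq q) w hlampos
  have hdiff : ((c - nearestLam (lamq q) w : ℤ):ℝ) * lamq q =
      (w - (nearestLam (lamq q) w : ℝ)*lamq q) - (w - (c:ℝ)*lamq q) := by
    push_cast
    ring
  have hle1 : ((c - nearestLam (lamq q) w : ℤ):ℝ) ≤ 1 := by
    by_contra hcon
    push_neg at hcon
    nlinarith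
  have hle2 : (-1:ℝ) ≤ ((c - nearestLam (lamq q) w : ℤ):ℝ) := by
    by_contra hcon
    push_neg at hcon
    nlinarith
  have hz1 : c - nearestLam (lamq q) w ≤ 1 := by exact_mod_cast hle1
  have hz2 : -1 ≤ c - nearestLam (lamq q) w := by exact_mod_cast hle2
  have htri : c - nearestLam (lamq q) w = -1 ∨ c - nearestLam (lamq q) w = 0 ∨
      c - nearestLam (lamq q) w = 1 := by omega
  rcases htri with h | h | h
  · right; right
    rw [h] at hdiff
    push_cast at hdiff
    linarith
  · left
    have : (nearestLam (lamq q) w : ℝ) = (c:ℝ) := by exact_mod_cast (by omega : nearestLam (lamq q) w = c)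
    rw [this]
  · right; left
    rw [h] at hdiff
    push_cast at hdiff
    linarith

theorem step (q : ℕ) (hq : 3 ≤ q) (u : List ℤ ⊕ (ℕ → ℤ)) (y : ℝ) (hu : Conv q u y) :
    (-(lamq q/2) ≤ y ∧ y ≤ lamq q/2) ∧
    (hd u = none → y = 0 ∧ u = Sum.inl []) ∧
    (∀ a : ℤ, hd u = some a → y ≠ 0 ∧
      (-(lamq q/2) ≤ -1/y - (a:ℝ)*lamq q ∧ -1/y - (a:ℝ)*lamq q ≤ lamq q/2) ∧
      Conv q (tl u) (-1/y - (a:ℝ)*lamq q)) := by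
  obtain ⟨hreg, hconv⟩ := hu
  have hlampos := lam_pos hq
  rcases u with L | f
  · rcases L with _ | ⟨a, M⟩
    · obtain ⟨hden, hval⟩ := hconv
      have hy : y = 0 := by
        rw [← hval]
        exact (Vl_nil (lamq q))
      subst hy
      exact ⟨⟨by linarith, by linarith⟩, fun _ => ⟨rfl, rfl⟩,
        fun a ha => nomatch ha⟩
    · obtain ⟨hden, hval⟩ := hconv
      obtain ⟨hnz, hregL⟩ := hreg
      obtain ⟨hdne, hVc, hKc, hKM⟩ := main_cons q hq a M hnz hregL
      obtain ⟨_, hlo, hhi⟩ := main_interval q hq (a::M) hnz hregL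
      obtain ⟨_, hloM, hhiM⟩ := main_interval q hq M
        (fun z hz => hnz z (List.mem_cons_of_mem a hz)) (regular_cons hregL)
      have hyv : y = Vl (lamq q) (a :: M) := hval.symm
      have hyne : y ≠ 0 := by
        rw [hyv, hVc]
        exact div_ne_zero (by norm_num) hdne
      have hinv : -1/y - (a:ℝ)*lamq q = Vl (lamq q) M := by
        rw [hyv, hVc]
        field_simp
        ring
      refine ⟨⟨by rw [hyv]; exact hlo, by rw [hyv]; exact hhi⟩,
        fun hnone => by simp [hd] at hnone, ?_⟩
      intro b hb
      have hab : a = b := Option.some.inj hb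
      rw [← hab]
      refine ⟨hyne, by rw [hinv]; exact ⟨hloM, hhiM⟩, ?_⟩
      rw [hinv]
      exact ⟨⟨fun z hz => hnz z (List.mem_cons_of_mem a hz), regular_cons hregL⟩,
        hKM, rfl⟩
  · obtain ⟨hnz, hregS⟩ := hreg
    obtain ⟨⟨hxlo, hxhi⟩, hxne, ⟨hylo, hyhi⟩, htail⟩ :=
      conv_shift q hq f y hnz hregS hconv
    refine ⟨⟨hxlo, hxhi⟩, fun hnone => by simp [hd] at hnone, ?_⟩
    intro a ha
    have haf : a = f 0 := (Option.some.inj ha).symm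
    subst haf
    exact ⟨hxne, ⟨hylo, hyhi⟩, ⟨⟨fun i => hnz (i+1), regularSeq_shift hregS⟩, htail⟩⟩

theorem one_step (q : ℕ) (hq : 3 ≤ q) (y : ℝ)
    (hb1 : fq (lamq q) y ≠ lamq q / 2) (hb2 : fq (lamq q) y ≠ -(lamq q) / 2)
    {u v : List ℤ ⊕ (ℕ → ℤ)} (hu : Conv q u y) (hv : Conv q v y) :
    hd u = hd v ∧ Conv q (tl u) (fq (lamq q) y) ∧ Conv q (tl v) (fq (lamq q) y) := by
  obtain ⟨hbu, hnu, hsu⟩ := step q hq u y hu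
  obtain ⟨hbv, hnv, hsv⟩ := step q hq v y hv
  rcases hdu : hd u with _ | a
  · rcases hdv : hd v with _ | b
    · obtain ⟨hy0, hu0⟩ := hnu hdu
      obtain ⟨_, hv0⟩ := hnv hdv
      have hfy : fq (lamq q) y = 0 := by rw [hy0, fq_zero']
      rw [hu0, hv0, hfy]
      exact ⟨rfl, conv_nil q, conv_nil q⟩
    · obtain ⟨hy0, _⟩ := hnu hdu
      obtain ⟨hyne, _, _⟩ := hsv b hdv
      exact absurd hy0 hyne
  · rcases hdv : hd v with _ | b
    · obtain ⟨hy0, _⟩ := hnv hdv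
      obtain ⟨hyne, _, _⟩ := hsu a hdu
      exact absurd hy0 hyne
    · obtain ⟨hyne, ⟨halo, hahi⟩, hcu⟩ := hsu a hdu
      obtain ⟨_, ⟨hblo, hbhi⟩, hcv⟩ := hsv b hdv
      have hfq : fq (lamq q) y = -1/y - (nearestLam (lamq q) (-1/y) : ℝ) * lamq q :=
        fq_ne_zero _ _ hyne
      have hfa : fq (lamq q) y = -1/y - (a:ℝ)*lamq q := by
        rcases near_digit q hq (-1/y) a halo hahi with h | h | h
        · rw [hfq]; exact h
        · exfalso; apply hb1; rw [hfq, h]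
        · exfalso; apply hb2; rw [hfq, h]; ring
      have hfb : fq (lamq q) y = -1/y - (b:ℝ)*lamq q := by
        rcases near_digit q hq (-1/y) b hblo hbhi with h | h | h
        · rw [hfq]; exact h
        · exfalso; apply hb1; rw [hfq, h]
        · exfalso; apply hb2; rw [hfq, h]; ring
      have hab : a = b := by
        have h1 : (a:ℝ)*lamq q = (b:ℝ)*lamq q := by
          rw [hfa] at hfb
          linarith
        have h2 : (a:ℝ) = (b:ℝ) := mul_right_cancel₀ (lam_pos hq).ne' h1
        exact_mod_cast h2
      refine ⟨congrArg some hab, by rw [hfa]; exact hcu, by rw [hfb]; exact hcv⟩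

theorem all_steps (q : ℕ) (hq : 3 ≤ q) (x : ℝ)
    (horb : ∀ n : ℕ, (fq (lamq q))^[n] x ≠ lamq q / 2 ∧ (fq (lamq q))^[n] x ≠ -(lamq q) / 2)
    {s t : List ℤ ⊕ (ℕ → ℤ)} (hs : Conv q s x) (ht : Conv q t x) :
    ∀ k, Conv q (tl^[k] s) ((fq (lamq q))^[k] x) ∧
      Conv q (tl^[k] t) ((fq (lamq q))^[k] x) := by
  intro k
  induction k with
  | zero => exact ⟨hs, ht⟩
  | succ k ih =>
    have hb := horb (k+1)
    rw [Function.iterate_succ_apply' (fq (lamq q)) k x] at hb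
    obtain ⟨_, h1, h2⟩ := one_step q hq ((fq (lamq q))^[k] x) hb.1 hb.2 ih.1 ih.2
    rw [Function.iterate_succ_apply' tl, Function.iterate_succ_apply' tl,
      Function.iterate_succ_apply' (fq (lamq q))]
    exact ⟨h1, h2⟩

theorem heads_eq (q : ℕ) (hq : 3 ≤ q) (x : ℝ)
    (horb : ∀ n : ℕ, (fq (lamq q))^[n] x ≠ lamq q / 2 ∧ (fq (lamq q))^[n] x ≠ -(lamq q) / 2)
    {s t : List ℤ ⊕ (ℕ → ℤ)} (hs : Conv q s x) (ht : Conv q t x) :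
    ∀ k, hd (tl^[k] s) = hd (tl^[k] t) := by
  intro k
  have ih := all_steps q hq x horb hs ht k
  have hb := horb (k+1)
  rw [Function.iterate_succ_apply' (fq (lamq q)) k x] at hb
  exact (one_step q hq ((fq (lamq q))^[k] x) hb.1 hb.2 ih.1 ih.2).1

end CF11
/-- Uniqueness of regular `λ_q`-CF's: if the `f_q`-orbit of `x ∈ I_q` never hits `±λ_q/2`,
then any two (finite or infinite) `q`-regular digit sequences whose continued fraction
`[0; a₁, a₂, …]` equals `x` coincide. -/
theorem stmt11 (q : ℕ) (hq : 3 ≤ q) (x : ℝ)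
    (hx : x ∈ Set.Icc (-(lamq q) / 2) (lamq q / 2))
    (horb : ∀ n : ℕ, (fq (lamq q))^[n] x ≠ lamq q / 2 ∧ (fq (lamq q))^[n] x ≠ -(lamq q) / 2)
    (s t : List ℤ ⊕ (ℕ → ℤ))
    (hs : SeqRegular q s) (ht : SeqRegular q t)
    (hsx : SeqConvTo (lamq q) s x) (htx : SeqConvTo (lamq q) t x) :
    s = t := by
  have hs' : CF11.Conv q s x := ⟨hs, hsx⟩
  have ht' : CF11.Conv q t x := ⟨ht, htx⟩
  have hheads := CF11.heads_eq q hq x horb hs' ht'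
  rcases s with L1 | f1 <;> rcases t with L2 | f2
  · congr 1
    apply List.ext_getElem?
    intro k
    have h := hheads k
    rwa [CF11.hd_iter_inl, CF11.hd_iter_inl] at h
  · exfalso
    have h := hheads L1.length
    rw [CF11.hd_iter_inl, CF11.hd_iter_inr] at h
    rw [List.getElem?_eq_none (le_refl L1.length)] at h
    exact nomatch h
  · exfalso
    have h := hheads L2.length
    rw [CF11.hd_iter_inl, CF11.hd_iter_inr] at h
    rw [List.getElem?_eq_none (le_refl L2.length)] at h
    exact nomatch h
  · congr 1
    funext i
    have h := hheads i
    rw [CF11.hd_iter_inr, CF11.hd_iter_inr] at h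
    exact Option.some.inj h
end

section
/- Let D_+ = {z ∈ ℂ : |z + 1/4| < 3/4} and D_− = {z ∈ ℂ : |z − 1/4| < 3/4}. Then for every integer n: (i) if n ≥ 3 and |z + 1/4| ≤ 3/4 then z + n ≠ 0 and −1/(z+n) ∈ D_+; (ii) if n ≤ −2 and |z + 1/4| ≤ 3/4 then z + n ≠ 0 and −1/(z+n) ∈ D_−; (iii) if n ≥ 2 and |z − 1/4| ≤ 3/4 then z + n ≠ 0 and −1/(z+n) ∈ D_+; (iv) if n ≤ −3 and |z − 1/4| ≤ 3/4 then z + n ≠ 0 and −1/(z+n) ∈ D_−. -/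
open Filter Topology

lemma branch_aux (w c : ℂ) (hw : w ≠ 0)
    (h : Complex.normSq (c * w - 1) < 9 / 16 * Complex.normSq w) :
    ‖-1 / w + c‖ < 3 / 4 := by
  have h1 : -1 / w + c = (c * w - 1) / w := by field_simp; ring
  rw [h1, norm_div, div_lt_iff₀ (norm_pos_iff.mpr hw)]
  have e1 := Complex.sq_norm (c * w - 1)
  have e2 := Complex.sq_norm w
  nlinarith [norm_nonneg (c * w - 1), norm_nonneg w]

lemma disc_sq {z : ℂ} {c : ℝ} (hz : ‖z + (c:ℂ)‖ ≤ 3/4) :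
    (z.re + c)^2 + z.im^2 ≤ 9/16 := by
  have hsq : Complex.normSq (z + (c:ℂ)) ≤ 9/16 := by
    have := Complex.sq_norm (z + (c:ℂ))
    nlinarith [norm_nonneg (z + (c:ℂ))]
  have h2 : Complex.normSq (z + (c:ℂ)) = (z.re + c)^2 + z.im^2 := by
    simp [Complex.normSq_apply]; ring
  linarith [h2 ▸ hsq]

lemma normsq_lin (z : ℂ) (n : ℤ) (c : ℝ) :
    Complex.normSq ((c:ℂ) * (z + (n:ℂ)) - 1)
      = (c * (z.re + n) - 1)^2 + (c * z.im)^2 ∧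
    Complex.normSq (z + (n:ℂ)) = (z.re + n)^2 + z.im^2 := by
  constructor <;> · simp [Complex.normSq_apply]; ring

lemma ne_zero_of_re (z : ℂ) (n : ℤ) (h : z.re + (n:ℝ) ≠ 0) : z + (n:ℂ) ≠ 0 := by
  intro hz
  exact h (by simpa using congrArg Complex.re hz)

lemma case1 (n : ℤ) (z : ℂ) (hn : 3 ≤ n) (hz : ‖z + 1 / 4‖ ≤ 3 / 4) :
    z + (n : ℂ) ≠ 0 ∧ ‖-1 / (z + (n : ℂ)) + 1 / 4‖ < 3 / 4 := by
  obtain ⟨e1, e2⟩ := normsq_lin z n (1/4)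
  have h3 : (3:ℝ) ≤ (n:ℝ) := by exact_mod_cast hn
  have hd := disc_sq (c := 1/4) (by simpa using hz)
  have hw : z + (n:ℂ) ≠ 0 := ne_zero_of_re z n (by nlinarith [sq_nonneg z.im])
  refine ⟨hw, ?_⟩
  have := branch_aux (z + (n:ℂ)) (((1/4:ℝ)):ℂ) hw
    (by rw [e1, e2]; nlinarith [sq_nonneg z.im])
  push_cast at this
  simpa using this

lemma case2 (n : ℤ) (z : ℂ) (hn : n ≤ -2) (hz : ‖z + 1 / 4‖ ≤ 3 / 4) :
    z + (n : ℂ) ≠ 0 ∧ ‖-1 / (z + (n : ℂ)) - 1 / 4‖ < 3 / 4 := by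
  obtain ⟨f1, f2⟩ := normsq_lin z n (-1/4)
  have h3 : (n:ℝ) ≤ (-2:ℝ) := by exact_mod_cast hn
  have hd := disc_sq (c := 1/4) (by simpa using hz)
  have hw : z + (n:ℂ) ≠ 0 := ne_zero_of_re z n (by nlinarith [sq_nonneg z.im])
  refine ⟨hw, ?_⟩
  have hx : z.re ≤ 1/2 := by nlinarith [sq_nonneg z.im]
  have hv : z.re + (n:ℝ) + 3/2 ≤ 0 := by linarith
  have := branch_aux (z + (n:ℂ)) (((-1/4:ℝ)):ℂ) hw
    (by
      rw [f1, f2]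
      have key : (z.re + (n:ℝ))^2 - (z.re + (n:ℝ)) - 2 > 0 := by
        nlinarith [sq_nonneg (z.re + (n:ℝ) + 3/2), hv]
      linarith [sq_nonneg z.im, key])
  push_cast at this
  rw [sub_eq_add_neg, show -(1/4 : ℂ) = -1/4 by norm_num]
  exact this

lemma case3 (n : ℤ) (z : ℂ) (hn : 2 ≤ n) (hz : ‖z - 1 / 4‖ ≤ 3 / 4) :
    z + (n : ℂ) ≠ 0 ∧ ‖-1 / (z + (n : ℂ)) + 1 / 4‖ < 3 / 4 := by
  obtain ⟨e1, e2⟩ := normsq_lin z n (1/4)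
  have h3 : (2:ℝ) ≤ (n:ℝ) := by exact_mod_cast hn
  have hd := disc_sq (c := -1/4) (z := z)
    (by rw [sub_eq_add_neg] at hz; convert hz using 3; norm_num)
  have hx : -1/2 ≤ z.re := by nlinarith [sq_nonneg z.im]
  have hv : 0 ≤ z.re + (n:ℝ) - 3/2 := by linarith
  have hw : z + (n:ℂ) ≠ 0 := ne_zero_of_re z n (by nlinarith [sq_nonneg z.im])
  refine ⟨hw, ?_⟩
  have := branch_aux (z + (n:ℂ)) (((1/4:ℝ)):ℂ) hw
    (by
      rw [e1, e2]
      have key : (z.re + (n:ℝ))^2 + (z.re + (n:ℝ)) - 2 > 0 := by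
        nlinarith [sq_nonneg (z.re + (n:ℝ) - 3/2), hv]
      linarith [sq_nonneg z.im, key])
  push_cast at this
  simpa using this

lemma case4 (n : ℤ) (z : ℂ) (hn : n ≤ -3) (hz : ‖z - 1 / 4‖ ≤ 3 / 4) :
    z + (n : ℂ) ≠ 0 ∧ ‖-1 / (z + (n : ℂ)) - 1 / 4‖ < 3 / 4 := by
  obtain ⟨f1, f2⟩ := normsq_lin z n (-1/4)
  have h3 : (n:ℝ) ≤ (-3:ℝ) := by exact_mod_cast hn
  have hd := disc_sq (c := -1/4) (z := z)
    (by rw [sub_eq_add_neg] at hz; convert hz using 3; norm_num)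
  have hw : z + (n:ℂ) ≠ 0 := ne_zero_of_re z n (by nlinarith [sq_nonneg z.im])
  refine ⟨hw, ?_⟩
  have := branch_aux (z + (n:ℂ)) (((-1/4:ℝ)):ℂ) hw
    (by rw [f1, f2]; nlinarith [sq_nonneg z.im])
  push_cast at this
  rw [sub_eq_add_neg, show -(1/4 : ℂ) = -1/4 by norm_num]
  exact this

/-- The inverse branches `θ_n(z) = -1/(z+n)` (case `q = 3`, `λ₃ = 1`) map the closed discs
`D_± = {|z ± 1/4| ≤ 3/4}` into the open discs, for `n` in the appropriate index sets. -/
theorem stmt17 (n : ℤ) (z : ℂ) :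
    (3 ≤ n → ‖z + 1 / 4‖ ≤ 3 / 4 →
      z + (n : ℂ) ≠ 0 ∧ ‖-1 / (z + (n : ℂ)) + 1 / 4‖ < 3 / 4) ∧
    (n ≤ -2 → ‖z + 1 / 4‖ ≤ 3 / 4 →
      z + (n : ℂ) ≠ 0 ∧ ‖-1 / (z + (n : ℂ)) - 1 / 4‖ < 3 / 4) ∧
    (2 ≤ n → ‖z - 1 / 4‖ ≤ 3 / 4 →
      z + (n : ℂ) ≠ 0 ∧ ‖-1 / (z + (n : ℂ)) + 1 / 4‖ < 3 / 4) ∧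
    (n ≤ -3 → ‖z - 1 / 4‖ ≤ 3 / 4 →
      z + (n : ℂ) ≠ 0 ∧ ‖-1 / (z + (n : ℂ)) - 1 / 4‖ < 3 / 4) := by
  exact ⟨fun h1 h2 => case1 n z h1 h2, fun h1 h2 => case2 n z h1 h2,
    fun h1 h2 => case3 n z h1 h2, fun h1 h2 => case4 n z h1 h2⟩
end
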